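/- arXiv:0704.0910 — 10 statements merged into one kernel-verified Lean document; each statement's English description precedes it below -/
import Mathlib

section
/- If φ : A → B is an n-homomorphism between algebras (a linear map satisfying φ(a₁⋯aₙ) = φ(a₁)⋯φ(aₙ)), then for every k ≥ 1 the induced map φ_k : M_k(A) → M_k(B) on k×k matrices, given by applying φ entrywise, is also an n-homomorphism. -/
/-- Product of a nonempty list of elements of a (possibly nonunital) multiplicative
structure: `nuProd x [a₁, …, aₘ] = x * a₁ * ⋯ * aₘ` (left-associated). -/
def nuProd {α : Type*} [Mul α] (x : α) (l : List α) : α := l.foldl (· * ·) x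

lemma nuProd_concat {α : Type*} [Mul α] (x : α) (l : List α) (a : α) :
    nuProd x (l.concat a) = nuProd x l * a := by
  simp [nuProd]

lemma nuProd_ofFn_succ {α : Type*} [Mul α] (x : α) {m : ℕ} (g : Fin (m + 1) → α) :
    nuProd x (List.ofFn g) = nuProd x (List.ofFn fun t : Fin m => g t.castSucc) * g (Fin.last m) := by
  rw [List.ofFn_succ', nuProd_concat]

def extPath {k m : ℕ} (c : Fin m → Fin k) (j : Fin k) : Fin (m + 1) → Fin k := Fin.snoc c j

lemma extPath_snoc {k m : ℕ} (c : Fin m → Fin k) (x j : Fin k) (t : Fin (m + 1)) :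
    extPath (Fin.snoc c x) j t.castSucc = extPath c x t := by
  simp [extPath]

lemma extPath_last {k m : ℕ} (c : Fin m → Fin k) (j : Fin k) :
    extPath c j (Fin.last m) = j := by
  simp [extPath]

lemma nuProd_entry {A : Type*} [NonUnitalRing A] {k : ℕ} (m : ℕ)
    (M : Matrix (Fin k) (Fin k) A) (F : Fin m → Matrix (Fin k) (Fin k) A) (i j : Fin k) :
    (nuProd M (List.ofFn F)) i j
      = ∑ c : Fin m → Fin k,
          nuProd (M i (extPath c j 0))
            (List.ofFn fun t : Fin m => F t (extPath c j t.castSucc) (extPath c j t.succ)) := by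
  induction m generalizing j with
  | zero =>
      simp [nuProd, extPath, Fin.snoc]
  | succ m IH =>
      rw [nuProd_ofFn_succ, Matrix.mul_apply]
      simp_rw [IH, Finset.sum_mul]
      rw [← (Fin.snocEquiv (fun _ : Fin (m + 1) => Fin k)).sum_comp, Fintype.sum_prod_type]
      apply Finset.sum_congr rfl
      intro x _
      apply Finset.sum_congr rfl
      intro c _
      have hEq : (Fin.snocEquiv (fun _ : Fin (m + 1) => Fin k)) (x, c) = Fin.snoc c x := by
        rfl
      rw [hEq, nuProd_ofFn_succ]
      congr 1
      · congr 1
        · congr 1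
          funext t
          rw [Fin.succ_castSucc, extPath_snoc, extPath_snoc]
      · rw [show (Fin.last m).succ = Fin.last (m + 1) from rfl, extPath_last,
          show ((Fin.last m : Fin (m+1)).castSucc) = (Fin.last m : Fin (m+1)).castSucc from rfl,
          extPath_snoc, extPath_last]

/-- If `φ : A → B` is an `n`-homomorphism between (complex) algebras, then for every
`k ≥ 1` the entrywise induced map on `k × k` matrices is again an `n`-homomorphism. -/
theorem matrix_map_nhom {A B : Type*}
    [NonUnitalRing A] [Module ℂ A] [SMulCommClass ℂ A A] [IsScalarTower ℂ A A]
    [NonUnitalRing B] [Module ℂ B] [SMulCommClass ℂ B B] [IsScalarTower ℂ B B]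
    (n k : ℕ) (hn : 2 ≤ n) (hk : 1 ≤ k) (φ : A →ₗ[ℂ] B)
    (hmul : ∀ (x : A) (f : Fin (n - 1) → A),
      φ (nuProd x (List.ofFn f)) = nuProd (φ x) (List.ofFn fun i => φ (f i))) :
    ∀ (M : Matrix (Fin k) (Fin k) A) (F : Fin (n - 1) → Matrix (Fin k) (Fin k) A),
      (nuProd M (List.ofFn F)).map φ
        = nuProd (M.map φ) (List.ofFn fun i => (F i).map φ) := by
  intro M F
  ext i j
  rw [Matrix.map_apply, nuProd_entry, nuProd_entry, map_sum]
  apply Finset.sum_congr rfl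
  intro c _
  rw [hmul]
  simp [Matrix.map_apply]
end

section
/- Let φ : A → B be an involutive n-homomorphism between C*-algebras with n = 2k even. Then φ is a positive map: for every a ∈ A there exists b ∈ B with φ(a*a) = b*b. -/
lemma nuProd_cons {α : Type*} [Semigroup α] (x y : α) (l : List α) :
    nuProd x (y :: l) = x * nuProd y l := by
  simp only [nuProd, List.foldl_cons]
  exact List.foldl_assoc

lemma nuProd_nil {α : Type*} [Mul α] (x : α) : nuProd x [] = x := rfl

lemma nuProd_replicate_succ {α : Type*} [Semigroup α] (x : α) (m : ℕ) :
    nuProd x (List.replicate (m + 1) x) = x * nuProd x (List.replicate m x) := by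
  rw [List.replicate_succ, nuProd_cons]

lemma nuProd_replicate_add {α : Type*} [Semigroup α] (x : α) (m n : ℕ) :
    nuProd x (List.replicate (m + n + 1) x) =
      nuProd x (List.replicate m x) * nuProd x (List.replicate n x) := by
  induction m with
  | zero => simpa [nuProd] using nuProd_replicate_succ x n
  | succ m ih =>
      have : m + 1 + n + 1 = (m + n + 1) + 1 := by omega
      rw [this, nuProd_replicate_succ, ih, nuProd_replicate_succ, mul_assoc]

lemma nuProd_replicate_star {α : Type*} [Semigroup α] [StarMul α] (x : α) (hx : star x = x)
    (m : ℕ) : star (nuProd x (List.replicate m x)) = nuProd x (List.replicate m x) := by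
  induction m with
  | zero => simpa [nuProd]
  | succ m ih =>
      rw [nuProd_replicate_succ, star_mul, ih, hx]
      have h1 : nuProd x (List.replicate m x) * x = nuProd x (List.replicate (m + 1) x) := by
        have := (nuProd_replicate_add x m 0).symm
        simpa [nuProd] using this
      rw [h1, nuProd_replicate_succ]

/-- An involutive `n`-homomorphism between C*-algebras with `n = 2k` even is a positive
map: `φ(a*a)` is of the form `b*b`. -/
theorem even_nhom_positive {A B : Type*}
    [NonUnitalNormedRing A] [StarRing A] [CStarRing A] [CompleteSpace A]
    [NormedSpace ℂ A] [IsScalarTower ℂ A A] [SMulCommClass ℂ A A] [StarModule ℂ A]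
    [NonUnitalNormedRing B] [StarRing B] [CStarRing B] [CompleteSpace B]
    [NormedSpace ℂ B] [IsScalarTower ℂ B B] [SMulCommClass ℂ B B] [StarModule ℂ B]
    (k : ℕ) (hk : 1 ≤ k) (φ : A →ₗ[ℂ] B)
    (hmul : ∀ (x : A) (f : Fin (2 * k - 1) → A),
      φ (nuProd x (List.ofFn f)) = nuProd (φ x) (List.ofFn fun i => φ (f i)))
    (hstar : ∀ a : A, φ (star a) = star (φ a)) :
    ∀ a : A, ∃ b : B, φ (star a * a) = star b * b := by
  letI : NonUnitalCStarAlgebra A :=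
    { ‹NonUnitalNormedRing A›, ‹StarRing A›, ‹CompleteSpace A›, ‹CStarRing A›,
      ‹NormedSpace ℂ A›, ‹IsScalarTower ℂ A A›, ‹SMulCommClass ℂ A A›, ‹StarModule ℂ A› with }
  intro a
  set p : A := star a * a with hp_def
  have hp : IsSelfAdjoint p := IsSelfAdjoint.star_mul_self a
  -- the quasispectrum of `star a * a` is nonnegative
  have hσ : ∀ x ∈ quasispectrum ℝ p, 0 ≤ x := by
    intro x hx
    have h := Unitization.quasispectrum_eq_spectrum_inr' ℝ ℂ p
    rw [h, hp_def, Unitization.inr_mul, Unitization.inr_star] at hx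
    exact spectrum_star_mul_self_nonneg x hx
  -- the 2k-th root of p via the continuous functional calculus
  set c : ℝ := (2 * k : ℝ)⁻¹ with hc_def
  have hc : 0 < c := by
    rw [hc_def]; positivity
  set q : A := cfcₙ (fun x : ℝ => |x| ^ c) p with hq_def
  have hq_sa : IsSelfAdjoint q := cfcₙ_predicate _ p
  have hcont : ∀ d : ℝ, 0 ≤ d → Continuous (fun x : ℝ => |x| ^ d) := by
    intro d hd
    exact continuous_abs.rpow_const fun x => Or.inr hd
  have hzero : ∀ d : ℝ, 0 < d → |(0:ℝ)| ^ d = 0 := by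
    intro d hd
    rw [abs_zero, Real.zero_rpow hd.ne']
  -- products of copies of q
  have key : ∀ m : ℕ, nuProd q (List.replicate m q) =
      cfcₙ (fun x : ℝ => |x| ^ ((m + 1 : ℝ) * c)) p := by
    intro m
    induction m with
    | zero =>
        simp only [List.replicate_zero, nuProd_nil, Nat.cast_zero, zero_add, one_mul, hq_def]
    | succ m ih =>
        rw [nuProd_replicate_succ, ih, hq_def]
        rw [← cfcₙ_mul (fun x : ℝ => |x| ^ c) (fun x : ℝ => |x| ^ ((m + 1 : ℝ) * c)) p
          (hcont c hc.le).continuousOn (hzero c hc)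
          (hcont _ (by positivity)).continuousOn (hzero _ (by positivity))]
        apply cfcₙ_congr
        intro x _
        simp only [Nat.cast_add, Nat.cast_one]
        rw [show ((m : ℝ) + 1 + 1) * c = c + ((m : ℝ) + 1) * c by ring,
          Real.rpow_add' (abs_nonneg x) (by positivity)]
  have hqm : nuProd q (List.replicate (2 * k - 1) q) = p := by
    rw [key (2 * k - 1)]
    have h2k : ((2 * k - 1 : ℕ) : ℝ) + 1 = (2 * k : ℝ) := by
      have h : ((2 * k - 1 : ℕ) + 1 : ℕ) = (2 * k : ℕ) := by omega
      exact_mod_cast congrArg (Nat.cast : ℕ → ℝ) h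
    have hone : (((2 * k - 1 : ℕ) : ℝ) + 1) * c = 1 := by
      rw [h2k, hc_def, mul_inv_cancel₀ (by positivity)]
    have hfun : (fun x : ℝ => |x| ^ ((((2 * k - 1 : ℕ) : ℝ) + 1) * c)) =
        fun x : ℝ => |x| := by
      ext x
      rw [hone, Real.rpow_one]
    rw [hfun]
    conv_rhs => rw [← cfcₙ_id ℝ p hp]
    apply cfcₙ_congr
    intro x hx
    simp [abs_of_nonneg (hσ x hx)]
  -- apply the multiplicativity and involutivity of φ
  have hφq : star (φ q) = φ q := by
    rw [← hstar, hq_sa.star_eq]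
  refine ⟨nuProd (φ q) (List.replicate (k - 1) (φ q)), ?_⟩
  have hm := hmul q (fun _ => q)
  simp only [List.ofFn_const] at hm
  rw [hqm] at hm
  calc φ p = nuProd (φ q) (List.replicate (2 * k - 1) (φ q)) := hm
    _ = nuProd (φ q) (List.replicate ((k - 1) + (k - 1) + 1) (φ q)) := by
        rw [show 2 * k - 1 = (k - 1) + (k - 1) + 1 by omega]
    _ = nuProd (φ q) (List.replicate (k - 1) (φ q)) *
          nuProd (φ q) (List.replicate (k - 1) (φ q)) := nuProd_replicate_add _ _ _
    _ = star (nuProd (φ q) (List.replicate (k - 1) (φ q))) *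
          nuProd (φ q) (List.replicate (k - 1) (φ q)) := by
        rw [nuProd_replicate_star _ hφq]
end

section
/- Let φ : A → B be a bounded involutive n-homomorphism between C*-algebras, n ≥ 2. Then ‖φ‖ ≤ 1, i.e., ‖φ(x)‖ ≤ ‖x‖ for all x ∈ A. -/
/-- `npow1 b m = b^(m+1)` in a non-unital setting. -/
private def npow1 {α : Type*} [Mul α] (b : α) : ℕ → α
  | 0 => b
  | m + 1 => npow1 b m * b

private lemma npow1_add {α : Type*} [Semigroup α] (b : α) (p q : ℕ) :
    npow1 b (p + q + 1) = npow1 b p * npow1 b q := by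
  induction q with
  | zero => rfl
  | succ q ih =>
    show npow1 b (p + q + 1) * b = _
    rw [ih, mul_assoc]
    rfl

private lemma npow1_comm {α : Type*} [Semigroup α] (b : α) (m : ℕ) :
    b * npow1 b m = npow1 b m * b := by
  induction m with
  | zero => rfl
  | succ m ih =>
    show b * (npow1 b m * b) = _
    rw [← mul_assoc, ih]
    rfl

private lemma npow1_star {α : Type*} [Semigroup α] [StarMul α] {b : α} (hb : star b = b)
    (m : ℕ) : star (npow1 b m) = npow1 b m := by
  induction m with
  | zero => exact hb
  | succ m ih =>
    show star (npow1 b m * b) = _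
    rw [star_mul, hb, ih, npow1_comm]
    rfl

private lemma norm_npow1_le {α : Type*} [NonUnitalNormedRing α] (b : α) (m : ℕ) :
    ‖npow1 b m‖ ≤ ‖b‖ ^ (m + 1) := by
  induction m with
  | zero => simp [npow1]
  | succ m ih =>
    calc ‖npow1 b m * b‖ ≤ ‖npow1 b m‖ * ‖b‖ := norm_mul_le _ _
      _ ≤ ‖b‖ ^ (m + 1) * ‖b‖ := by
          exact mul_le_mul_of_nonneg_right ih (norm_nonneg _)
      _ = ‖b‖ ^ (m + 2) := (pow_succ _ _).symm

private lemma norm_npow1_two_pow {α : Type*} [NonUnitalNormedRing α] [StarRing α]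
    [CStarRing α] {b : α} (hb : star b = b) (k : ℕ) :
    ‖npow1 b (2 ^ k - 1)‖ = ‖b‖ ^ (2 ^ k) := by
  induction k with
  | zero => simp [npow1]
  | succ k ih =>
    have h1 : (1:ℕ) ≤ 2 ^ k := Nat.one_le_two_pow
    have harith : 2 ^ (k + 1) - 1 = (2 ^ k - 1) + (2 ^ k - 1) + 1 := by
      have : 2 ^ (k + 1) = 2 ^ k + 2 ^ k := by rw [pow_succ]; omega
      omega
    rw [harith, npow1_add]
    rw [show npow1 b (2 ^ k - 1) * npow1 b (2 ^ k - 1)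
        = star (npow1 b (2 ^ k - 1)) * npow1 b (2 ^ k - 1) from by rw [npow1_star hb]]
    rw [CStarRing.norm_star_mul_self, ih, ← pow_add]
    congr 1
    rw [pow_succ]
    omega

private lemma norm_npow1_eq {α : Type*} [NonUnitalNormedRing α] [StarRing α]
    [CStarRing α] {b : α} (hb : star b = b) (m : ℕ) :
    ‖npow1 b m‖ = ‖b‖ ^ (m + 1) := by
  refine le_antisymm (norm_npow1_le b m) ?_
  rcases eq_or_lt_of_le (norm_nonneg b) with h0 | h0
  · have hb0 : b = 0 := by rwa [eq_comm, norm_eq_zero] at h0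
    subst hb0
    cases m with
    | zero => simp [npow1]
    | succ m => simp [npow1, npow1_comm]
  · -- choose K = 2^(m+1) - 1 ≥ m + 1
    have hK : m + 1 < 2 ^ (m + 1) := Nat.lt_two_pow_self
    set q : ℕ := 2 ^ (m + 1) - 1 - m - 1 with hq
    have hsplit : 2 ^ (m + 1) - 1 = m + q + 1 := by omega
    have key : ‖b‖ ^ (2 ^ (m + 1)) ≤ ‖npow1 b m‖ * ‖b‖ ^ (q + 1) := by
      calc ‖b‖ ^ (2 ^ (m + 1)) = ‖npow1 b (2 ^ (m + 1) - 1)‖ :=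
            (norm_npow1_two_pow hb (m + 1)).symm
        _ = ‖npow1 b m * npow1 b q‖ := by rw [hsplit, npow1_add]
        _ ≤ ‖npow1 b m‖ * ‖npow1 b q‖ := norm_mul_le _ _
        _ ≤ ‖npow1 b m‖ * ‖b‖ ^ (q + 1) :=
            mul_le_mul_of_nonneg_left (norm_npow1_le b q) (norm_nonneg _)
    have hpow : ‖b‖ ^ (2 ^ (m + 1)) = ‖b‖ ^ (m + 1) * ‖b‖ ^ (q + 1) := by
      rw [← pow_add]
      congr 1
      omega
    have hqpos : 0 < ‖b‖ ^ (q + 1) := pow_pos h0 _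
    rw [hpow] at key
    exact le_of_mul_le_mul_right key hqpos

/-- Alternating word: `altP y k = (star y) * y * (star y) * ⋯` with `k+1` factors. -/
private def altP {α : Type*} [Mul α] [Star α] (y : α) : ℕ → α
  | 0 => star y
  | k + 1 => altP y k * (if (k + 1) % 2 = 0 then star y else y)

private lemma altP_odd {α : Type*} [Semigroup α] [StarMul α] (y : α) (m : ℕ) :
    altP y (2 * m + 1) = npow1 (star y * y) m := by
  induction m with
  | zero => simp [altP, npow1]
  | succ m ih =>
    have h2 : 2 * (m + 1) + 1 = (2 * m + 1) + 1 + 1 := by ring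
    rw [h2]
    show altP y ((2 * m + 1) + 1) * _ = _
    have he : ((2 * m + 1) + 1) % 2 = 0 := by omega
    have ho : ((2 * m + 1) + 1 + 1) % 2 = 1 := by omega
    show (altP y (2 * m + 1) * (if ((2 * m + 1) + 1) % 2 = 0 then star y else y)) *
        (if ((2 * m + 1) + 1 + 1) % 2 = 0 then star y else y) = _
    rw [he, ho]
    simp only [if_pos rfl, if_neg (by omega : ¬ (1:ℕ) = 0)]
    rw [ih, mul_assoc]
    rfl

private lemma altP_even {α : Type*} [Semigroup α] [StarMul α] (y : α) (m : ℕ) :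
    altP y (2 * m + 2) = npow1 (star y * y) m * star y := by
  have h2 : 2 * m + 2 = (2 * m + 1) + 1 := by ring
  rw [h2]
  show altP y (2 * m + 1) * (if ((2 * m + 1) + 1) % 2 = 0 then star y else y) = _
  rw [if_pos (by omega : ((2 * m + 1) + 1) % 2 = 0), altP_odd]

private lemma norm_altP {α : Type*} [NonUnitalNormedRing α] [StarRing α]
    [CStarRing α] (y : α) (k : ℕ) : ‖altP y k‖ = ‖y‖ ^ (k + 1) := by
  have hb : star (star y * y) = star y * y := by simp [star_mul]
  have hbn : ‖star y * y‖ = ‖y‖ * ‖y‖ := CStarRing.norm_star_mul_self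
  rcases Nat.even_or_odd' k with ⟨m, rfl | rfl⟩
  · -- k = 2 * m
    cases m with
    | zero => simpa [altP] using norm_star y
    | succ m =>
      have h2 : 2 * (m + 1) = 2 * m + 2 := by ring
      rw [h2, altP_even]
      set z := npow1 (star y * y) m * star y with hz
      have hzz : z * star z = npow1 (star y * y) (2 * m + 2) := by
        rw [hz, star_mul, star_star, npow1_star hb]
        calc npow1 (star y * y) m * star y * (y * npow1 (star y * y) m)
            = npow1 (star y * y) m * (star y * y) * npow1 (star y * y) m := by
              simp only [mul_assoc]
          _ = npow1 (star y * y) (m + 1) * npow1 (star y * y) m := rfl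
          _ = npow1 (star y * y) ((m + 1) + m + 1) := (npow1_add _ _ _).symm
          _ = npow1 (star y * y) (2 * m + 2) := by congr 1; omega
      have h1 : ‖z‖ * ‖z‖ = ‖y‖ ^ (2 * m + 3) * ‖y‖ ^ (2 * m + 3) := by
        calc ‖z‖ * ‖z‖ = ‖z * star z‖ := CStarRing.norm_self_mul_star.symm
          _ = ‖star y * y‖ ^ (2 * m + 3) := by rw [hzz, norm_npow1_eq hb]
          _ = (‖y‖ * ‖y‖) ^ (2 * m + 3) := by rw [hbn]
          _ = ‖y‖ ^ (2 * m + 3) * ‖y‖ ^ (2 * m + 3) := by rw [mul_pow]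
      have hz0 : 0 ≤ ‖z‖ := norm_nonneg _
      have hy0 : 0 ≤ ‖y‖ ^ (2 * m + 3) := pow_nonneg (norm_nonneg _) _
      have : ‖z‖ = ‖y‖ ^ (2 * m + 3) := by nlinarith
      rw [this]
  · -- k = 2 * m + 1
    rw [altP_odd, norm_npow1_eq hb, hbn]
    rw [show 2 * m + 1 + 1 = 2 * (m + 1) from by ring, pow_mul, sq]

private lemma altP_eq_nuProd {α : Type*} [Mul α] [Star α] (y : α) (k : ℕ) :
    altP y k = nuProd (star y) (List.ofFn fun i : Fin k => if (i : ℕ) % 2 = 0 then y else star y) := by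
  induction k with
  | zero => simp [altP, nuProd]
  | succ k ih =>
    rw [List.ofFn_succ']
    show altP y k * (if (k + 1) % 2 = 0 then star y else y) = _
    rw [List.concat_eq_append]
    unfold nuProd
    rw [List.foldl_concat]
    have h1 : (List.ofFn fun i : Fin k =>
        if ((Fin.castSucc i : Fin (k+1)) : ℕ) % 2 = 0 then y else star y)
        = List.ofFn fun i : Fin k => if (i : ℕ) % 2 = 0 then y else star y := by
      congr 1
    rw [h1]
    have h2 : (if ((Fin.last k : Fin (k+1)) : ℕ) % 2 = 0 then y else star y)
        = (if (k + 1) % 2 = 0 then star y else y) := by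
      simp only [Fin.val_last]
      rcases Nat.even_or_odd k with he | ho
      · have h := Nat.even_iff.mp he
        rw [if_pos h, if_neg (by omega)]
      · have h := Nat.odd_iff.mp ho
        rw [if_neg (by omega), if_pos (by omega)]
    rw [h2, ih]
    rfl

/-- A bounded involutive `n`-homomorphism between C*-algebras (`n ≥ 2`) is norm
contractive: `‖φ(x)‖ ≤ ‖x‖` for all `x`. -/
theorem bounded_involutive_nhom_contractive {A B : Type*}
    [NonUnitalNormedRing A] [StarRing A] [CStarRing A] [CompleteSpace A]
    [NormedSpace ℂ A] [IsScalarTower ℂ A A] [SMulCommClass ℂ A A] [StarModule ℂ A]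
    [NonUnitalNormedRing B] [StarRing B] [CStarRing B] [CompleteSpace B]
    [NormedSpace ℂ B] [IsScalarTower ℂ B B] [SMulCommClass ℂ B B] [StarModule ℂ B]
    (n : ℕ) (hn : 2 ≤ n) (φ : A →L[ℂ] B)
    (hmul : ∀ (x : A) (f : Fin (n - 1) → A),
      φ (nuProd x (List.ofFn f)) = nuProd (φ x) (List.ofFn fun i => φ (f i)))
    (hstar : ∀ a : A, φ (star a) = star (φ a)) :
    ∀ x : A, ‖φ x‖ ≤ ‖x‖ := by
  have hn1 : n - 1 + 1 = n := by omega
  -- φ maps the alternating word to the alternating word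
  have hword : ∀ x : A, φ (altP x (n - 1)) = altP (φ x) (n - 1) := by
    intro x
    have h := hmul (star x) (fun i : Fin (n - 1) => if (i : ℕ) % 2 = 0 then x else star x)
    rw [← altP_eq_nuProd] at h
    have h2 : (List.ofFn fun i : Fin (n - 1) =>
        φ (if (i : ℕ) % 2 = 0 then x else star x))
        = List.ofFn fun i : Fin (n - 1) =>
            if (i : ℕ) % 2 = 0 then φ x else star (φ x) := by
      congr 1
      funext i
      rw [apply_ite φ, hstar]
    rw [h2, hstar, ← altP_eq_nuProd] at h
    exact h
  set M : ℝ := max ‖φ‖ 1 with hM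
  have hM1 : (1:ℝ) ≤ M := le_max_right _ _
  have key : ∀ (k : ℕ) (x : A), ‖φ x‖ ^ (n ^ k) ≤ M * ‖x‖ ^ (n ^ k) := by
    intro k
    induction k with
    | zero =>
      intro x
      simpa using (φ.le_opNorm x).trans
        (mul_le_mul_of_nonneg_right (le_max_left _ _) (norm_nonneg _))
    | succ k ih =>
      intro x
      calc ‖φ x‖ ^ (n ^ (k + 1)) = (‖φ x‖ ^ n) ^ (n ^ k) := by
            rw [← pow_mul, pow_succ, mul_comm (n ^ k) n]
        _ = ‖altP (φ x) (n - 1)‖ ^ (n ^ k) := by rw [norm_altP, hn1]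
        _ = ‖φ (altP x (n - 1))‖ ^ (n ^ k) := by rw [hword]
        _ ≤ M * ‖altP x (n - 1)‖ ^ (n ^ k) := ih _
        _ = M * (‖x‖ ^ n) ^ (n ^ k) := by rw [norm_altP, hn1]
        _ = M * ‖x‖ ^ (n ^ (k + 1)) := by
            rw [← pow_mul, pow_succ, mul_comm (n ^ k) n]
  intro x
  by_contra hcon
  push_neg at hcon
  have hx0 : 0 ≤ ‖x‖ := norm_nonneg x
  rcases eq_or_lt_of_le hx0 with h0 | h0
  · have := key 0 x
    simp only [pow_zero, pow_one] at this
    rw [← h0] at this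
    nlinarith
  · set r : ℝ := ‖φ x‖ / ‖x‖ with hr
    have hr1 : 1 < r := (one_lt_div h0).mpr hcon
    obtain ⟨k, hk⟩ := pow_unbounded_of_one_lt M hr1
    have hkle : k ≤ n ^ k := (Nat.lt_pow_self (n := k) (by omega)).le
    have h1 : r ^ k ≤ r ^ (n ^ k) := pow_le_pow_right₀ hr1.le hkle
    have h2 : r ^ (n ^ k) ≤ M := by
      have hkey := key k x
      rw [hr, div_pow]
      rw [div_le_iff₀ (pow_pos h0 _)]
      exact hkey
    linarith
end

section
/- Let A be a C*-algebra, a ∈ A, k ≥ 1, and λ a nonzero scalar. Then λ ∈ σ((a*a)^k) if and only if there does not exist c ∈ A with c(λ·1 − (a*a)^k) = a (the product interpreted in the unitization of A). -/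
/-- Harris' lemma: in a (possibly nonunital) C*-algebra `A`, for `λ ≠ 0` and `k ≥ 1`,
`λ ∈ σ((a*a)^k)` (spectrum computed in the unitization) iff there is no `c ∈ A` with
`c (λ·1 − (a*a)^k) = a` (product in the unitization). -/
theorem harris_lemma {A : Type*}
    [NonUnitalNormedRing A] [StarRing A] [CStarRing A] [CompleteSpace A]
    [NormedSpace ℂ A] [IsScalarTower ℂ A A] [SMulCommClass ℂ A A] [StarModule ℂ A]
    (k : ℕ) (hk : 1 ≤ k) (a : A) (lam : ℂ) (hlam : lam ≠ 0) :
    lam ∈ spectrum ℂ (((star a * a : A) : Unitization ℂ A) ^ k) ↔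
      ¬∃ c : A, (c : Unitization ℂ A) *
          (algebraMap ℂ (Unitization ℂ A) lam - ((star a * a : A) : Unitization ℂ A) ^ k)
        = (a : Unitization ℂ A) := by
  letI : NonUnitalCStarAlgebra A :=
    { ‹NonUnitalNormedRing A›, ‹StarRing A›, ‹CStarRing A›, ‹NormedSpace ℂ A› with
      complete := ‹CompleteSpace A›.complete
      smul_assoc := fun x y z => smul_assoc x y z
      smul_comm := fun x y z => smul_comm x y z
      star_smul := fun r x => star_smul r x }
  set b : Unitization ℂ A := ((star a * a : A) : Unitization ℂ A) with hbdef
  set u : Unitization ℂ A := algebraMap ℂ (Unitization ℂ A) lam - b ^ k with hudef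
  have hba : b = star (a : Unitization ℂ A) * (a : Unitization ℂ A) := by
    rw [hbdef, Unitization.inr_mul, Unitization.inr_star]
  have hbsa : IsSelfAdjoint b := hba ▸ IsSelfAdjoint.star_mul_self (a : Unitization ℂ A)
  have hbnormal : IsStarNormal b := hbsa.isStarNormal
  constructor
  · rintro hmem ⟨c, hc⟩
    rw [spectrum.map_pow_of_pos b (by omega : 0 < k)] at hmem
    obtain ⟨μ, hμ, hμk⟩ := hmem
    have hμ0 : μ ≠ 0 := by
      rintro rfl
      exact hlam (by simpa [zero_pow (by omega : k ≠ 0)] using hμk.symm)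
    have hμpos : (0 : ℝ) < ‖μ‖ := norm_pos_iff.mpr hμ0
    set d : Unitization ℂ A := star (c : Unitization ℂ A) * (c : Unitization ℂ A) with hddef
    have hfac : b = star u * d * u := by
      rw [hba, ← hc, hddef, star_mul (c : Unitization ℂ A) u]
      simp only [mul_assoc]
    -- choose ε
    set ε : ℝ := min 1 (‖μ‖ / (2 * (‖d‖ + 1))) with hεdef
    have hdpos : (0 : ℝ) < 2 * (‖d‖ + 1) := by positivity
    have hε0 : 0 < ε := lt_min one_pos (by positivity)
    have hε1 : ε ≤ 1 := min_le_left _ _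
    have hε2 : ε * (2 * (‖d‖ + 1)) ≤ ‖μ‖ :=
      (le_div_iff₀ hdpos).mp (min_le_right _ _)
    -- the bump function
    set g : ℂ → ℂ := fun z => ((max 0 (1 - ‖z ^ k - lam‖ / ε) : ℝ) : ℂ) with hgdef
    have hgcont : Continuous g := by
      apply Complex.continuous_ofReal.comp
      apply Continuous.max continuous_const
      fun_prop
    have hg1 : g μ = 1 := by
      simp [hgdef, hμk, hε0.ne']
    have hgnorm : ∀ z : ℂ, ‖g z‖ ≤ 1 := by
      intro z
      rw [hgdef]
      simp only [Complex.norm_real, Real.norm_eq_abs]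
      rw [abs_of_nonneg (le_max_left _ _)]
      apply max_le zero_le_one
      have : 0 ≤ ‖z ^ k - lam‖ / ε := by positivity
      linarith
    have hgsmall : ∀ z : ℂ, ‖(lam - z ^ k) * g z‖ ≤ ε := by
      intro z
      rcases le_or_gt ‖z ^ k - lam‖ ε with h | h
      · calc ‖(lam - z ^ k) * g z‖ ≤ ‖lam - z ^ k‖ * ‖g z‖ := norm_mul_le _ _
          _ ≤ ε * 1 := by
              apply mul_le_mul _ (hgnorm z) (norm_nonneg _) hε0.le
              rwa [norm_sub_rev]
          _ = ε := mul_one ε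
      · have h0 : (0 : ℝ) ⊔ (1 - ‖z ^ k - lam‖ / ε) = 0 :=
          max_eq_left (by rw [sub_nonpos, le_div_iff₀ hε0]; nlinarith)
        have : g z = 0 := by rw [hgdef]; simp only [h0]; norm_num
        simp [this, hε0.le]
    set e : Unitization ℂ A := cfc g b with hedef
    have hu : u = cfc (fun z : ℂ => lam - z ^ k) b := by
      rw [cfc_sub _ _ b (by fun_prop) (by fun_prop), cfc_const lam b, cfc_pow_id b k, hudef]
    have hse : star e = e := by
      rw [hedef, ← cfc_star]
      congr 1
      funext z
      simp [hgdef, ← Complex.ofReal_def]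
    -- norm of u * e
    have hue : ‖u * e‖ ≤ ε := by
      have : u * e = cfc (fun z : ℂ => (lam - z ^ k) * g z) b := by
        rw [hu, hedef, ← cfc_mul _ _ b (by fun_prop) (by fun_prop)]
      rw [this]
      exact norm_cfc_le hε0.le fun z _ => hgsmall z
    -- lower bound
    have hlow : ‖μ‖ ≤ ‖e * b * e‖ := by
      have h2 : e * b * e = cfc (fun z : ℂ => g z * z * g z) b := by
        have := cfc_mul (fun z : ℂ => g z * z) g b (by fun_prop) (by fun_prop)
        rw [cfc_mul g (fun z : ℂ => z) b (by fun_prop) (by fun_prop), cfc_id' ℂ b] at this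
        rw [hedef, ← this]
      rw [h2]
      have := norm_apply_le_norm_cfc (fun z : ℂ => g z * z * g z) b hμ (by fun_prop)
      simpa [hg1] using this
    -- upper bound
    have h3 : e * b * e = star (u * e) * d * (u * e) := by
      rw [hfac, star_mul, hse]
      simp only [mul_assoc]
    have hub : ‖e * b * e‖ ≤ ε * ‖d‖ * ε := by
      rw [h3]
      calc ‖star (u * e) * d * (u * e)‖ ≤ ‖star (u * e) * d‖ * ‖u * e‖ := norm_mul_le _ _
        _ ≤ ‖star (u * e)‖ * ‖d‖ * ‖u * e‖ := by gcongr; exact norm_mul_le _ _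
        _ = ‖u * e‖ * ‖d‖ * ‖u * e‖ := by rw [norm_star]
        _ ≤ ε * ‖d‖ * ε := by gcongr
    nlinarith [norm_nonneg d, hlow.trans hub]
  · intro h
    by_contra hmem
    rw [spectrum.notMem_iff] at hmem
    apply h
    refine ⟨(((a : Unitization ℂ A) * ↑hmem.unit⁻¹) : Unitization ℂ A).snd, ?_⟩
    have hfst : (((a : Unitization ℂ A) * ↑hmem.unit⁻¹) : Unitization ℂ A).fst = 0 := by
      simp [Unitization.fst_mul]
    have hcoe : ((((a : Unitization ℂ A) * ↑hmem.unit⁻¹) : Unitization ℂ A).snd :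
        Unitization ℂ A) = (a : Unitization ℂ A) * ↑hmem.unit⁻¹ := by
      conv_rhs => rw [← Unitization.inl_fst_add_inr_snd_eq
        (((a : Unitization ℂ A) * ↑hmem.unit⁻¹) : Unitization ℂ A)]
      rw [hfst]
      simp
    rw [hcoe, mul_assoc, IsUnit.val_inv_mul hmem, mul_one]
end

section
/- Let φ : A → B be an involutive n-homomorphism between C*-algebras with n ≥ 3 odd. Then φ is norm contractive: ‖φ(a)‖ ≤ ‖a‖ for all a ∈ A. -/
namespace OddNHomAux

/-- `pw a m = a ^ (m + 1)` (defined for a bare `Mul`). -/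
def pw {α : Type*} [Mul α] (a : α) : ℕ → α
  | 0 => a
  | m + 1 => pw a m * a

variable {α : Type*}

section Semigroup

variable [Semigroup α]

lemma pw_add (a : α) (i j : ℕ) : pw a i * pw a j = pw a (i + j + 1) := by
  induction j with
  | zero => rfl
  | succ j ih =>
    show pw a i * (pw a j * a) = pw a (i + j + 1) * a
    rw [← mul_assoc, ih]

lemma pw_pw (a : α) (i j : ℕ) : pw (pw a i) j = pw a (i * j + i + j) := by
  induction j with
  | zero => simp [pw]
  | succ j ih =>
    show pw (pw a i) j * pw a i = _
    rw [ih, pw_add]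
    congr 1
    ring

lemma pw_comm (a : α) (m : ℕ) : a * pw a m = pw a m * a := by
  induction m with
  | zero => rfl
  | succ m ih =>
    show a * (pw a m * a) = _
    rw [← mul_assoc, ih]
    rfl

end Semigroup

section StarSemigroup

variable [Semigroup α] [StarMul α]

lemma pw_isSelfAdjoint {a : α} (ha : IsSelfAdjoint a) (m : ℕ) :
    IsSelfAdjoint (pw a m) := by
  induction m with
  | zero => exact ha
  | succ m ih =>
    show IsSelfAdjoint (pw a m * a)
    rw [IsSelfAdjoint, star_mul, ih.star_eq, ha.star_eq, pw_comm]

end StarSemigroup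

section CStarNorm

variable {E : Type*} [NonUnitalNormedRing E] [StarRing E] [CStarRing E]

lemma norm_pw_le (a : E) : ∀ m : ℕ, ‖pw a m‖ ≤ ‖a‖ ^ (m + 1) := by
  intro m
  induction m with
  | zero => simp [pw]
  | succ m ih =>
    calc ‖pw a m * a‖ ≤ ‖pw a m‖ * ‖a‖ := norm_mul_le _ _
    _ ≤ ‖a‖ ^ (m + 1) * ‖a‖ := by
        exact mul_le_mul_of_nonneg_right ih (norm_nonneg a)
    _ = ‖a‖ ^ (m + 2) := by ring

lemma pw_zero_elt (m : ℕ) : pw (0 : E) m = 0 := by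
  induction m with
  | zero => rfl
  | succ m ih => show pw (0 : E) m * 0 = 0; rw [mul_zero]

lemma norm_pw_sq {a : E} (ha : IsSelfAdjoint a) (j : ℕ) :
    ‖pw a (2 * j + 1)‖ = ‖pw a j‖ * ‖pw a j‖ := by
  have h1 : pw a (2 * j + 1) = pw a j * pw a j := by
    rw [pw_add]; congr 1; ring
  have h2 := CStarRing.norm_star_mul_self (x := pw a j)
  rw [(pw_isSelfAdjoint ha j).star_eq] at h2
  rw [h1, h2]

lemma norm_pw_sa {a : E} (ha : IsSelfAdjoint a) (m : ℕ) :
    ‖pw a m‖ = ‖a‖ ^ (m + 1) := by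
  rcases eq_or_ne a 0 with rfl | ha0
  · simp [pw_zero_elt]
  have hc : (0 : ℝ) < ‖a‖ := norm_pos_iff.mpr ha0
  -- powers of two
  have h2 : ∀ t : ℕ, ‖pw a (2 ^ t - 1)‖ = ‖a‖ ^ (2 ^ t) := by
    intro t
    induction t with
    | zero => simp [pw]
    | succ t ih =>
      have he : 2 ^ (t + 1) - 1 = 2 * (2 ^ t - 1) + 1 := by
        have : 1 ≤ 2 ^ t := Nat.one_le_two_pow
        omega
      rw [he, norm_pw_sq ha, ih, ← pow_add]
      congr 1
      have : 1 ≤ 2 ^ t := Nat.one_le_two_pow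
      omega
  -- lower bound
  refine le_antisymm (norm_pw_le a m) ?_
  have ht : m + 2 < 2 ^ (m + 2) := Nat.lt_two_pow_self
  have hsplit : pw a (2 ^ (m + 2) - 1) = pw a m * pw a (2 ^ (m + 2) - 2 - m) := by
    rw [pw_add]
    congr 1
    omega
  have hub : ‖a‖ ^ (2 ^ (m + 2)) ≤ ‖pw a m‖ * ‖a‖ ^ (2 ^ (m + 2) - 2 - m + 1) := by
    calc ‖a‖ ^ (2 ^ (m + 2)) = ‖pw a (2 ^ (m + 2) - 1)‖ := (h2 (m + 2)).symm
    _ ≤ ‖pw a m‖ * ‖pw a (2 ^ (m + 2) - 2 - m)‖ := by rw [hsplit]; exact norm_mul_le _ _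
    _ ≤ ‖pw a m‖ * ‖a‖ ^ (2 ^ (m + 2) - 2 - m + 1) := by
        exact mul_le_mul_of_nonneg_left (norm_pw_le a _) (norm_nonneg _)
  have hkey : ‖a‖ ^ (m + 1) * ‖a‖ ^ (2 ^ (m + 2) - 2 - m + 1)
      ≤ ‖pw a m‖ * ‖a‖ ^ (2 ^ (m + 2) - 2 - m + 1) := by
    rw [← pow_add, show m + 1 + (2 ^ (m + 2) - 2 - m + 1) = 2 ^ (m + 2) by omega]
    exact hub
  have hpos : (0 : ℝ) < ‖a‖ ^ (2 ^ (m + 2) - 2 - m + 1) := pow_pos hc _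
  exact le_of_mul_le_mul_right hkey hpos

end CStarNorm

section NuProd

variable [Semigroup α]

lemma nuProd_append (x : α) (l₁ l₂ : List α) :
    nuProd x (l₁ ++ l₂) = nuProd (nuProd x l₁) l₂ :=
  List.foldl_append

lemma nuProd_replicate_self (c : α) : ∀ m : ℕ, nuProd c (List.replicate m c) = pw c m := by
  intro m
  induction m with
  | zero => rfl
  | succ m ih =>
    rw [List.replicate_succ', nuProd_append, ih]
    rfl

end NuProd

/-- `alt b j = b * (star b * b) ^ j`. -/
def alt [Mul α] [Star α] (b : α) : ℕ → α
  | 0 => b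
  | j + 1 => alt b j * star b * b

section Alt

variable [Semigroup α] [StarMul α]

lemma nuProd_alt (b : α) : ∀ j : ℕ,
    nuProd b ((List.replicate j [star b, b]).flatten) = alt b j := by
  intro j
  induction j with
  | zero => rfl
  | succ j ih =>
    rw [List.replicate_succ', List.flatten_append, nuProd_append, ih]
    show (alt b j * star b) * b = _
    rfl

lemma length_flatten_replicate_pair (c d : α) : ∀ j : ℕ,
    ((List.replicate j [c, d]).flatten).length = 2 * j := by
  intro j
  induction j with
  | zero => rfl
  | succ j ih =>
    rw [List.replicate_succ', List.flatten_append, List.length_append, ih]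
    simp
    omega

lemma star_alt_mul_self (b : α) : ∀ j : ℕ,
    star (alt b j) * alt b j = pw (star b * b) (2 * j) := by
  intro j
  induction j with
  | zero => rfl
  | succ j ih =>
    show star (alt b j * star b * b) * (alt b j * star b * b) = _
    have h1 : star (alt b j * star b * b) = star b * b * star (alt b j) := by
      simp [star_mul, mul_assoc]
    rw [h1]
    have h2 : star b * b * star (alt b j) * (alt b j * star b * b)
        = (star b * b) * (star (alt b j) * alt b j) * (star b * b) := by
      simp [mul_assoc]
    rw [h2, ih]
    show pw (star b * b) 0 * pw (star b * b) (2 * j) * pw (star b * b) 0 = _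
    rw [pw_add, pw_add]
    congr 1
    ring

end Alt

section AltNorm

variable {E : Type*} [NonUnitalNormedRing E] [StarRing E] [CStarRing E]

lemma norm_alt (b : E) (j : ℕ) : ‖alt b j‖ = ‖b‖ ^ (2 * j + 1) := by
  have h1 : ‖alt b j‖ * ‖alt b j‖ = (‖b‖ ^ (2 * j + 1)) * (‖b‖ ^ (2 * j + 1)) := by
    calc ‖alt b j‖ * ‖alt b j‖ = ‖star (alt b j) * alt b j‖ :=
          (CStarRing.norm_star_mul_self).symm
    _ = ‖pw (star b * b) (2 * j)‖ := by rw [star_alt_mul_self]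
    _ = ‖star b * b‖ ^ (2 * j + 1) := norm_pw_sa (IsSelfAdjoint.star_mul_self b) _
    _ = (‖b‖ * ‖b‖) ^ (2 * j + 1) := by rw [CStarRing.norm_star_mul_self]
    _ = (‖b‖ ^ (2 * j + 1)) * (‖b‖ ^ (2 * j + 1)) := by rw [← mul_pow]
  exact (mul_self_inj (norm_nonneg _) (by positivity)).mp h1

end AltNorm

lemma ofFn_get_cast {β : Type*} {m : ℕ} (l : List β) (h : l.length = m) :
    List.ofFn (fun i : Fin m => l.get (Fin.cast h.symm i)) = l := by
  subst h
  exact List.ofFn_get l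

end OddNHomAux

open OddNHomAux

set_option maxHeartbeats 2000000 in
/-- An involutive `n`-homomorphism between (possibly nonunital) C*-algebras with
`n = 2k+1 ≥ 3` odd is norm contractive. -/
theorem odd_nhom_contractive {A B : Type*}
    [NonUnitalNormedRing A] [StarRing A] [CStarRing A] [CompleteSpace A]
    [NormedSpace ℂ A] [IsScalarTower ℂ A A] [SMulCommClass ℂ A A] [StarModule ℂ A]
    [NonUnitalNormedRing B] [StarRing B] [CStarRing B] [CompleteSpace B]
    [NormedSpace ℂ B] [IsScalarTower ℂ B B] [SMulCommClass ℂ B B] [StarModule ℂ B]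
    (k : ℕ) (hk : 1 ≤ k) (φ : A →ₗ[ℂ] B)
    (hmul : ∀ (x : A) (f : Fin (2 * k) → A),
      φ (nuProd x (List.ofFn f)) = nuProd (φ x) (List.ofFn fun i => φ (f i)))
    (hstar : ∀ a : A, φ (star a) = star (φ a)) :
    ∀ a : A, ‖φ a‖ ≤ ‖a‖ := by
  letI : NonUnitalCStarAlgebra A := { }
  letI : NonUnitalCStarAlgebra B := { }
  letI : PartialOrder (Unitization ℂ B) := CStarAlgebra.spectralOrder _
  letI : StarOrderedRing (Unitization ℂ B) := CStarAlgebra.spectralOrderedRing _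
  obtain ⟨k', rfl⟩ : ∃ k', k = k' + 1 := ⟨k - 1, by omega⟩
  set k := k' + 1 with hkdef
  -- master multiplicativity lemma for lists of length 2k
  have phi_list : ∀ (x : A) (l : List A), l.length = 2 * k →
      φ (nuProd x l) = nuProd (φ x) (l.map φ) := by
    intro x l hl
    have h1 := hmul x (fun i => l.get (Fin.cast hl.symm i))
    rw [ofFn_get_cast l hl] at h1
    have h2 : (List.ofFn fun i => φ (l.get (Fin.cast hl.symm i))) = l.map φ := by
      have h3 := List.map_ofFn (f := fun i => l.get (Fin.cast hl.symm i)) (g := φ)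
      rw [ofFn_get_cast l hl] at h3
      exact h3.symm
    rwa [h2] at h1
  -- power merging
  have hpow : ∀ z : A, φ (pw z (2 * k)) = pw (φ z) (2 * k) := by
    intro z
    have h1 := phi_list z (List.replicate (2 * k) z) (by simp)
    rwa [nuProd_replicate_self, List.map_replicate, nuProd_replicate_self] at h1
  -- star of image of selfadjoint
  have hsa : ∀ z : A, IsSelfAdjoint z → IsSelfAdjoint (φ z) := by
    intro z hz
    rw [IsSelfAdjoint, ← hstar, hz.star_eq]
  -- the key contractivity on selfadjoint elements of norm at most one
  have Esa1 : ∀ h : A, IsSelfAdjoint h → ‖h‖ ≤ 1 → ‖φ h‖ ≤ 1 := by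
    intro h hhsa hh1
    by_contra hcon
    push_neg at hcon
    set u : B := φ h with hu
    have husa : IsSelfAdjoint u := hsa h hhsa
    -- index bookkeeping
    set ik : ℕ := 2 * k' with hik
    set X : ℕ := 2 * k * (2 * k) + 2 * k + 2 * k with hX
    set jx : ℕ := 4 * k' * k' + 10 * k' + 7 with hjx
    set J : ℕ := 2 * k' * k' + 5 * k' + 3 with hJ
    set mx : ℕ := 4 * k' * k' + 14 * k' + 9 with hmx
    set my : ℕ := 4 * k' + 3 with hmy
    -- φ(h^(X+1)) = u^(X+1)
    have hpow2 : φ (pw h X) = pw u X := by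
      have hXeq : X = 2 * k * (2 * k) + 2 * k + 2 * k := hX
      rw [show pw h X = pw (pw h (2 * k)) (2 * k) by rw [pw_pw],
        hpow, hpow, pw_pw]
    -- the sqrt witness
    set s : A := cfcₙ (fun t : ℝ => t * Real.sqrt (1 - t ^ (2 * J))) h with hs
    have hssa : IsSelfAdjoint s := cfcₙ_predicate _ h
    have hcont : ContinuousOn (fun t : ℝ => t * Real.sqrt (1 - t ^ (2 * J)))
        (quasispectrum ℝ h) := by fun_prop
    have hcpow : ∀ m : ℕ, cfcₙ (fun t : ℝ => t ^ (m + 1)) h = pw h m := by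
      intro m
      induction m with
      | zero =>
        rw [show (fun t : ℝ => t ^ 1) = fun t : ℝ => t by funext t; rw [pow_one]]
        exact cfcₙ_id' ℝ h
      | succ m ih =>
        have h1 : cfcₙ (fun t : ℝ => t ^ (m + 1) * t) h
            = cfcₙ (fun t : ℝ => t ^ (m + 1)) h * cfcₙ (fun t : ℝ => t) h :=
          cfcₙ_mul _ _ h
        rw [show (fun t : ℝ => t ^ (m + 2)) = fun t : ℝ => t ^ (m + 1) * t by
            funext t; rw [pow_succ]]
        rw [h1, ih, cfcₙ_id' ℝ h]
        rfl
    have hss : s * s = pw h 1 - pw h jx := by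
      have h1 : s * s = cfcₙ (fun t : ℝ =>
          (t * Real.sqrt (1 - t ^ (2 * J))) * (t * Real.sqrt (1 - t ^ (2 * J)))) h :=
        (cfcₙ_mul _ _ h).symm
      have h2 : (quasispectrum ℝ h).EqOn
          (fun t : ℝ => (t * Real.sqrt (1 - t ^ (2 * J))) * (t * Real.sqrt (1 - t ^ (2 * J))))
          (fun t : ℝ => t ^ 2 - t ^ (jx + 1)) := by
        intro t ht
        have habs : |t| ≤ 1 := by
          have h3 := norm_apply_le_norm_cfcₙ (fun t : ℝ => t) h ht (by fun_prop) rfl hhsa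
          rw [cfcₙ_id' ℝ h] at h3
          calc |t| = ‖t‖ := rfl
          _ ≤ ‖h‖ := h3
          _ ≤ 1 := hh1
        have h4 : t ^ 2 ≤ 1 := by
          have h4' := abs_le.mp habs
          nlinarith [h4'.1, h4'.2]
        have hsq : t ^ (2 * J) ≤ 1 := by
          rw [pow_mul]
          exact pow_le_one₀ (sq_nonneg t) h4
        have h5 : (0 : ℝ) ≤ 1 - t ^ (2 * J) := by linarith
        show (t * Real.sqrt (1 - t ^ (2 * J))) * (t * Real.sqrt (1 - t ^ (2 * J)))
            = t ^ 2 - t ^ (jx + 1)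
        have h6 : Real.sqrt (1 - t ^ (2 * J)) * Real.sqrt (1 - t ^ (2 * J))
            = 1 - t ^ (2 * J) := Real.mul_self_sqrt h5
        have h7 : jx + 1 = 2 + 2 * J := by rw [hjx, hJ]; ring
        calc (t * Real.sqrt (1 - t ^ (2 * J))) * (t * Real.sqrt (1 - t ^ (2 * J)))
            = t * t * (Real.sqrt (1 - t ^ (2 * J)) * Real.sqrt (1 - t ^ (2 * J))) := by ring
        _ = t * t * (1 - t ^ (2 * J)) := by rw [h6]
        _ = t ^ 2 - t ^ (2 + 2 * J) := by ring
        _ = t ^ 2 - t ^ (jx + 1) := by rw [h7]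
      rw [h1, cfcₙ_congr h2]
      have h8 : cfcₙ (fun t : ℝ => t ^ 2 - t ^ (jx + 1)) h
          = cfcₙ (fun t : ℝ => t ^ 2) h - cfcₙ (fun t : ℝ => t ^ (jx + 1)) h :=
        cfcₙ_sub _ _ h
      rw [h8, hcpow 1, hcpow jx]
    -- key list identity
    have key1 : ∀ w : A, φ (pw h ik * w * w) = pw u ik * φ w * φ w := by
      intro w
      have hl : (List.replicate ik h ++ [w, w]).length = 2 * k := by
        simp only [List.length_append, List.length_replicate, List.length_cons,
          List.length_nil]
        rw [hik, hkdef]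
        omega
      have h1 := phi_list h (List.replicate ik h ++ [w, w]) hl
      rw [nuProd_append, nuProd_replicate_self, List.map_append, List.map_replicate,
        nuProd_append, nuProd_replicate_self] at h1
      exact h1
    set Y : B := pw u ik with hY
    have hYsa : IsSelfAdjoint Y := pw_isSelfAdjoint husa ik
    have hfs_sa : IsSelfAdjoint (φ s) := hsa s hssa
    -- difference identity
    have hdiff : pw u my - pw u mx = star (φ s * Y) * (φ s * Y) := by
      have e1 : pw h ik * pw h 1 = pw h (2 * k) := by
        rw [pw_add]; congr 1; try rw [hik, hkdef]; try ring
      have e2 : pw h ik * pw h jx = pw h X := by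
        rw [pw_add]; congr 1; try rw [hik, hjx, hX, hkdef]; try ring
      have e3 : φ (pw h ik * pw h 1) * Y = pw u my := by
        rw [e1, hpow, hY, pw_add]
        congr 1
        try rw [hmy, hik, hkdef]; try ring
      have e4 : φ (pw h ik * pw h jx) * Y = pw u mx := by
        rw [e2, hpow2, hY, pw_add]
        congr 1
        try rw [hmx, hik, hX, hkdef]; try ring
      have e5 : pw u my - pw u mx = φ (pw h ik * (s * s)) * Y := by
        calc pw u my - pw u mx
            = φ (pw h ik * pw h 1) * Y - φ (pw h ik * pw h jx) * Y := by rw [e3, e4]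
        _ = (φ (pw h ik * pw h 1) - φ (pw h ik * pw h jx)) * Y := by rw [sub_mul]
        _ = φ (pw h ik * pw h 1 - pw h ik * pw h jx) * Y := by rw [map_sub]
        _ = φ (pw h ik * (s * s)) * Y := by rw [hss, mul_sub]
      rw [e5, show pw h ik * (s * s) = pw h ik * s * s from (mul_assoc _ _ _).symm, key1 s,
        star_mul, hYsa.star_eq, hfs_sa.star_eq]
      simp only [mul_assoc]
    -- move to the unitization of B
    have hmxsplit : pw u mx = star (pw u (2 * k' * k' + 7 * k' + 4))
        * pw u (2 * k' * k' + 7 * k' + 4) := by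
      rw [(pw_isSelfAdjoint husa _).star_eq, pw_add]
      congr 1
      try rw [hmx]; try ring
    have h0x : (0 : Unitization ℂ B) ≤ ((pw u mx : B) : Unitization ℂ B) := by
      rw [hmxsplit, Unitization.inr_mul, Unitization.inr_star]
      exact star_mul_self_nonneg _
    have hlexy : ((pw u mx : B) : Unitization ℂ B) ≤ ((pw u my : B) : Unitization ℂ B) := by
      rw [← sub_nonneg, ← Unitization.inr_sub ℂ, hdiff, Unitization.inr_mul,
        Unitization.inr_star]
      exact star_mul_self_nonneg _
    have hnorm := CStarAlgebra.norm_le_norm_of_nonneg_of_le h0x hlexy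
    rw [Unitization.norm_inr, Unitization.norm_inr, norm_pw_sa husa, norm_pw_sa husa] at hnorm
    have hle' := (pow_le_pow_iff_right₀ hcon).mp hnorm
    have hlt : my + 1 < mx + 1 := by
      rw [hmx, hmy]
      nlinarith [sq_nonneg k']
    omega
  -- selfadjoint elements : contractive
  have EsaAll : ∀ h : A, IsSelfAdjoint h → ‖φ h‖ ≤ ‖h‖ := by
    intro h hhsa
    rcases eq_or_ne h 0 with rfl | h0
    · simp
    · have hc : (0 : ℝ) < ‖h‖ := norm_pos_iff.mpr h0
      have hsmul : IsSelfAdjoint ((((‖h‖⁻¹ : ℝ) : ℂ)) • h) := by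
        rw [IsSelfAdjoint, star_smul, hhsa.star_eq, Complex.star_def, Complex.conj_ofReal]
      have hnr : ‖(((‖h‖⁻¹ : ℝ) : ℂ))‖ = ‖h‖⁻¹ := by
        rw [Complex.norm_real, Real.norm_eq_abs, abs_of_nonneg (by positivity)]
      have hn1 : ‖(((‖h‖⁻¹ : ℝ) : ℂ)) • h‖ ≤ 1 := by
        rw [norm_smul, hnr, inv_mul_cancel₀ (ne_of_gt hc)]
      have h2 := Esa1 _ hsmul hn1
      rw [map_smul, norm_smul, hnr] at h2
      calc ‖φ h‖ = ‖h‖ * (‖h‖⁻¹ * ‖φ h‖) := by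
            field_simp
      _ ≤ ‖h‖ * 1 := mul_le_mul_of_nonneg_left h2 (le_of_lt hc)
      _ = ‖h‖ := mul_one _
  -- all elements : 2-Lipschitz
  have Hall : ∀ b : A, ‖φ b‖ ≤ 2 * ‖b‖ := by
    intro b
    have hre : IsSelfAdjoint ((realPart b : A)) := (realPart b).2
    have him : IsSelfAdjoint ((imaginaryPart b : A)) := (imaginaryPart b).2
    have hdec : (realPart b : A) + Complex.I • (imaginaryPart b : A) = b :=
      realPart_add_I_smul_imaginaryPart b
    have hnre : ‖(realPart b : A)‖ ≤ ‖b‖ := by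
      rw [realPart_apply_coe]
      calc ‖(2⁻¹ : ℝ) • (b + star b)‖ = ‖(2⁻¹ : ℝ)‖ * ‖b + star b‖ := norm_smul _ _
      _ ≤ 2⁻¹ * (‖b‖ + ‖star b‖) := by
          rw [show ‖(2⁻¹ : ℝ)‖ = 2⁻¹ by norm_num]
          exact mul_le_mul_of_nonneg_left (norm_add_le _ _) (by norm_num)
      _ = ‖b‖ := by rw [norm_star]; ring
    have hnim : ‖(imaginaryPart b : A)‖ ≤ ‖b‖ := by
      rw [imaginaryPart_apply_coe]
      calc ‖-Complex.I • (2⁻¹ : ℝ) • (b - star b)‖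
          = ‖-Complex.I‖ * ‖(2⁻¹ : ℝ) • (b - star b)‖ := norm_smul _ _
      _ = ‖(2⁻¹ : ℝ)‖ * ‖b - star b‖ := by rw [norm_neg, Complex.norm_I, one_mul, norm_smul]
      _ ≤ 2⁻¹ * (‖b‖ + ‖star b‖) := by
          rw [show ‖(2⁻¹ : ℝ)‖ = 2⁻¹ by norm_num]
          exact mul_le_mul_of_nonneg_left (norm_sub_le _ _) (by norm_num)
      _ = ‖b‖ := by rw [norm_star]; ring
    calc ‖φ b‖ = ‖φ ((realPart b : A)) + Complex.I • φ ((imaginaryPart b : A))‖ := by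
          rw [← map_smul, ← map_add, hdec]
    _ ≤ ‖φ ((realPart b : A))‖ + ‖Complex.I • φ ((imaginaryPart b : A))‖ := norm_add_le _ _
    _ = ‖φ ((realPart b : A))‖ + ‖φ ((imaginaryPart b : A))‖ := by
          rw [norm_smul, Complex.norm_I, one_mul]
    _ ≤ ‖(realPart b : A)‖ + ‖(imaginaryPart b : A)‖ :=
          add_le_add (EsaAll _ hre) (EsaAll _ him)
    _ ≤ 2 * ‖b‖ := by linarith
  -- φ commutes with `alt · k`
  have key2 : ∀ z : A, φ (alt z k) = alt (φ z) k := by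
    intro z
    have h1 := phi_list z ((List.replicate k [star z, z]).flatten)
      (length_flatten_replicate_pair _ _ k)
    rw [nuProd_alt] at h1
    have hmap : List.map φ ((List.replicate k [star z, z]).flatten)
        = (List.replicate k [star (φ z), φ z]).flatten := by
      clear h1 hmul phi_list
      induction k with
      | zero => rfl
      | succ m ih =>
        rw [List.replicate_succ', List.replicate_succ' (n := m), List.flatten_append,
          List.flatten_append, List.map_append, ih]
        simp [hstar]
    rw [hmap, nuProd_alt] at h1
    exact h1
  -- the orbit argument
  intro a
  let T : ℕ → A := fun m => m.rec a (fun _ x => alt x k)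
  have hT0 : T 0 = a := rfl
  have hTs : ∀ m, T (m + 1) = alt (T m) k := fun _ => rfl
  have hTnorm : ∀ m, ‖T m‖ = ‖a‖ ^ ((2 * k + 1) ^ m) := by
    intro m
    induction m with
    | zero => simp [hT0]
    | succ m ih =>
      rw [hTs, norm_alt, ih, ← pow_mul, ← pow_succ]
  have hTφ : ∀ m, ‖φ (T m)‖ = ‖φ a‖ ^ ((2 * k + 1) ^ m) := by
    intro m
    induction m with
    | zero => simp [hT0]
    | succ m ih =>
      rw [hTs, key2, norm_alt, ih, ← pow_mul, ← pow_succ]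
  have horb : ∀ m, ‖φ a‖ ^ ((2 * k + 1) ^ m) ≤ 2 * ‖a‖ ^ ((2 * k + 1) ^ m) := by
    intro m
    rw [← hTnorm, ← hTφ]
    exact Hall _
  -- numerical conclusion
  by_contra hcon
  push_neg at hcon
  have hd0 : (0 : ℝ) < ‖a‖ := by
    rcases (norm_nonneg a).lt_or_eq with h | h
    · exact h
    · exfalso
      have h1 := horb 0
      rw [pow_zero, pow_one, pow_one] at h1
      rw [← h] at h1
      nlinarith
  set r : ℝ := ‖φ a‖ / ‖a‖ with hrdef
  have hr1 : 1 < r := (one_lt_div hd0).mpr hcon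
  obtain ⟨m, hm⟩ := pow_unbounded_of_one_lt (2 : ℝ) hr1
  have hmle : m ≤ (2 * k + 1) ^ m := Nat.le_of_lt (Nat.lt_pow_self (n := m) (by omega))
  have hchain : r ^ m ≤ r ^ ((2 * k + 1) ^ m) :=
    pow_le_pow_right₀ (le_of_lt hr1) hmle
  have hrN : r ^ ((2 * k + 1) ^ m) ≤ 2 := by
    rw [hrdef, div_pow, div_le_iff₀ (pow_pos hd0 _)]
    calc ‖φ a‖ ^ ((2 * k + 1) ^ m) ≤ 2 * ‖a‖ ^ ((2 * k + 1) ^ m) := horb m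
    _ = 2 * ‖a‖ ^ ((2 * k + 1) ^ m) := rfl
  linarith
end

section
/- Let A be a unital algebra (or ring) and φ : A → B an n-homomorphism. Then e := φ(1) satisfies e^n = e, the map ψ(a) := e^{n-2}φ(a) is an algebra homomorphism, φ(a) = eψ(a) = ψ(a)e for all a, and e commutes with the range of φ. -/
section aux

variable {S : Type*} [Semigroup S] (e : S)

private lemma nuR_succ (k : ℕ) (b : S) :
    (List.replicate (k + 1) e).foldl (· * ·) b
      = (List.replicate k e).foldl (· * ·) b * e := by
  induction k generalizing b with
  | zero => rfl
  | succ k ih =>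
      rw [List.replicate_succ, List.foldl_cons, ih,
        List.replicate_succ, List.foldl_cons]

private lemma nuMul_R (k : ℕ) (b c : S) :
    c * (List.replicate k e).foldl (· * ·) b
      = (List.replicate k e).foldl (· * ·) (c * b) := by
  induction k generalizing b with
  | zero => rfl
  | succ k ih =>
      rw [List.replicate_succ, List.foldl_cons, ih, ← mul_assoc,
        ← List.foldl_cons, ← List.replicate_succ]

private lemma nuL_mul (k : ℕ) (b c : S) :
    (List.replicate k e).foldr (· * ·) b * c
      = (List.replicate k e).foldr (· * ·) (b * c) := by
  induction k with
  | zero => rfl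
  | succ k ih =>
      rw [List.replicate_succ, List.foldr_cons, mul_assoc, ih, List.foldr_cons]

private lemma nuL_pull (k : ℕ) (b : S) :
    (List.replicate k e).foldr (· * ·) (e * b)
      = e * (List.replicate k e).foldr (· * ·) b := by
  induction k with
  | zero => rfl
  | succ k ih =>
      rw [List.replicate_succ, List.foldr_cons, ih, List.foldr_cons]

private lemma nuL_eq_R (b : S) (h : e * b = b * e) (k : ℕ) :
    (List.replicate k e).foldr (· * ·) b
      = (List.replicate k e).foldl (· * ·) b := by
  induction k with
  | zero => rfl
  | succ k ih =>
      rw [List.replicate_succ, List.foldr_cons, ih, nuMul_R, h,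
        ← List.foldl_cons, ← List.replicate_succ]

end aux

/-- If `A` is a unital algebra and `φ : A → B` an `n`-homomorphism, then `e := φ(1)`
is an `n`-potent (`e^n = e`, expressed as a nonunital product), the map
`ψ(a) := e^(n-2) φ(a)` is multiplicative (hence an algebra homomorphism),
`φ(a) = e ψ(a) = ψ(a) e`, and `e` commutes with the range of `φ`. -/
theorem unital_nhom_structure {A B : Type*}
    [Ring A] [Algebra ℂ A]
    [NonUnitalRing B] [Module ℂ B] [SMulCommClass ℂ B B] [IsScalarTower ℂ B B]
    (n : ℕ) (hn : 2 ≤ n) (φ : A →ₗ[ℂ] B)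
    (hmul : ∀ (x : A) (f : Fin (n - 1) → A),
      φ (x * (List.ofFn f).prod) = nuProd (φ x) (List.ofFn fun i => φ (f i))) :
    let e := φ 1
    let ψ : A → B := fun a => (List.replicate (n - 2) e).foldr (· * ·) (φ a)
    ((List.replicate (n - 1) e).foldr (· * ·) e = e) ∧
    (∀ a b : A, ψ (a * b) = ψ a * ψ b) ∧
    (∀ a : A, φ a = e * ψ a ∧ φ a = ψ a * e) ∧
    (∀ a : A, e * φ a = φ a * e) := by
  obtain ⟨m, rfl⟩ : ∃ m, n = m + 2 := ⟨n - 2, by omega⟩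
  intro e ψ
  have he : e = φ 1 := rfl
  have hψ : ∀ a : A, ψ a = (List.replicate m e).foldr (· * ·) (φ a) := fun _ => rfl
  -- key identity: φ (a*b) = (φ a * φ b) * e^m
  have K : ∀ a b : A, φ (a * b)
      = (List.replicate m e).foldl (· * ·) (φ a * φ b) := by
    intro a b
    have h : φ (a * (List.ofFn (Fin.cons b fun _ => (1:A) : Fin (m + 1) → A)).prod)
        = nuProd (φ a)
            (List.ofFn fun i => φ ((Fin.cons b fun _ => (1:A) : Fin (m + 1) → A) i)) :=
      hmul a _
    simp only [List.ofFn_succ, Fin.cons_zero, Fin.cons_succ, List.ofFn_const,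
      List.prod_cons, List.prod_replicate, one_pow, mul_one, nuProd,
      List.foldl_cons] at h
    exact h
  -- φ a = φ a * e^(m+1)
  have star1 : ∀ a : A, φ a = (List.replicate (m + 1) e).foldl (· * ·) (φ a) := by
    intro a
    have h := K a 1
    rw [mul_one] at h
    exact h
  -- φ a = (e * φ a) * e^m
  have star2 : ∀ a : A, φ a = (List.replicate m e).foldl (· * ·) (e * φ a) := by
    intro a
    have h := K 1 a
    rw [one_mul] at h
    exact h
  -- e commutes with the range of φ
  have comm : ∀ a : A, e * φ a = φ a * e := by
    intro a
    calc e * φ a = e * (List.replicate (m + 1) e).foldl (· * ·) (φ a) := by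
          rw [← star1]
      _ = (List.replicate (m + 1) e).foldl (· * ·) (e * φ a) := nuMul_R e _ _ _
      _ = (List.replicate m e).foldl (· * ·) (e * φ a) * e := nuR_succ e m _
      _ = φ a * e := by rw [← star2]
  refine ⟨?_, ?_, ?_, comm⟩
  · -- e^(m+2) = e
    show (List.replicate (m + 1) e).foldr (· * ·) e = e
    rw [nuL_eq_R e e rfl]
    exact (star1 1).symm
  · -- ψ is multiplicative
    intro a b
    rw [hψ, hψ, hψ, nuL_mul, nuL_eq_R e (φ b) (comm b), nuMul_R, ← K]
  · intro a
    have h1 : φ a = e * ψ a := by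
      rw [hψ]
      show φ a = (List.replicate (m + 1) e).foldr (· * ·) (φ a)
      rw [nuL_eq_R e (φ a) (comm a)]
      exact star1 a
    refine ⟨h1, ?_⟩
    rw [hψ, nuL_mul, ← comm a, nuL_pull]
    exact h1
end

section
/- Let A be a unital algebra, φ : A → B an n-homomorphism with n ≥ 3, and ψ(a) := φ(1)^{n-2}φ(a) the associated homomorphism. If a = a₁a₂⋯aₙ then ψ(a) = φ(a₁a₂)φ(a₃)⋯φ(aₙ). -/
private lemma ofFn_snoc' {α : Type*} {k : ℕ} (g : Fin k → α) (y : α) :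
    List.ofFn (Fin.snoc g y) = List.ofFn g ++ [y] := by
  rw [List.ofFn_succ']
  simp [Fin.snoc_castSucc, Fin.snoc_last]

private def epow {B : Type*} [Mul B] (e : B) (k : ℕ) : B :=
  (List.replicate k e).foldr (· * ·) e

private lemma foldr_rep {B : Type*} [Semigroup B] (e : B) :
    ∀ (k : ℕ) (b : B), (List.replicate k e).foldr (· * ·) (e * b) = epow e k * b := by
  intro k
  induction k with
  | zero => intro b; simp [epow]
  | succ k ih =>
      intro b
      rw [List.replicate_succ, List.foldr_cons, ih b, ← mul_assoc]
      rfl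

private lemma epow_succ' {B : Type*} [Semigroup B] (e : B) (k : ℕ) :
    epow e (k + 1) = epow e k * e := by
  rw [epow, List.replicate_succ', List.foldr_append]
  simpa using foldr_rep e k e

private lemma mul_foldl {B : Type*} [Semigroup B] :
    ∀ (l : List B) (x c : B), c * l.foldl (· * ·) x = l.foldl (· * ·) (c * x) := by
  intro l
  induction l with
  | nil => intro x c; rfl
  | cons a l ih => intro x c; simp only [List.foldl_cons, ih, mul_assoc]

private lemma foldl_rep {B : Type*} [Semigroup B] (e : B) :
    ∀ k : ℕ, (List.replicate k e).foldl (· * ·) e = epow e k := by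
  intro k
  induction k with
  | zero => rfl
  | succ k ih =>
      rw [List.replicate_succ', List.foldl_append, ih]
      show epow e k * e = epow e (k + 1)
      rw [epow_succ']

/-- If `A` is unital, `φ : A → B` an `n`-homomorphism (`n ≥ 3`), and
`ψ(a) := φ(1)^(n-2) φ(a)`, then whenever `a = a₁a₂⋯aₙ`, one has
`ψ(a) = φ(a₁a₂) φ(a₃) ⋯ φ(aₙ)`. -/
theorem unital_nhom_psi_formula {A B : Type*}
    [Ring A] [Algebra ℂ A]
    [NonUnitalRing B] [Module ℂ B] [SMulCommClass ℂ B B] [IsScalarTower ℂ B B]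
    (n : ℕ) (hn : 3 ≤ n) (φ : A →ₗ[ℂ] B)
    (hmul : ∀ (x : A) (f : Fin (n - 1) → A),
      φ (x * (List.ofFn f).prod) = nuProd (φ x) (List.ofFn fun i => φ (f i))) :
    ∀ (a : A) (f : Fin n → A), a = (List.ofFn f).prod →
      (List.replicate (n - 2) (φ 1)).foldr (· * ·) (φ a)
        = nuProd (φ (f ⟨0, by omega⟩ * f ⟨1, by omega⟩))
            (List.ofFn fun i : Fin (n - 2) => φ (f ⟨i.val + 2, by omega⟩)) := by
  obtain ⟨m, rfl⟩ : ∃ m, n = m + 3 := ⟨n - 3, by omega⟩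
  intro a f ha
  set e := φ 1 with he
  have hmul' : ∀ (x : A) (g : Fin (m + 2) → A),
      φ (x * (List.ofFn g).prod) = nuProd (φ x) (List.ofFn fun i => φ (g i)) := hmul
  -- Step 1: φ a = nuProd (φ (f 0)) [φ (f 1), ..., φ (f (m+2))]
  have hA : φ a = nuProd (φ (f 0)) (List.ofFn fun i : Fin (m + 2) => φ (f i.succ)) := by
    rw [ha, List.ofFn_succ, List.prod_cons]
    exact hmul' (f 0) (fun i => f i.succ)
  -- Step 2: φ (f 0 * f 1) = epow e m * φ (f 0) * φ (f 1)
  have hB : φ (f 0 * f 1) = epow e m * φ (f 0) * φ (f 1) := by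
    set F : Fin (m + 2) → A := Fin.snoc (Fin.snoc (fun _ : Fin m => (1 : A)) (f 0)) (f 1)
      with hF
    set G : Fin (m + 2) → B := Fin.snoc (Fin.snoc (fun _ : Fin m => e) (φ (f 0))) (φ (f 1))
      with hG
    have := hmul' 1 F
    rw [hF] at this
    rw [ofFn_snoc', ofFn_snoc', List.ofFn_const, List.prod_append, List.prod_append,
      List.prod_replicate, one_pow, List.prod_cons, List.prod_cons, List.prod_nil,
      one_mul, mul_one, mul_one, one_mul] at this
    rw [this]
    have hfun : (fun i : Fin (m + 2) => φ (F i)) = G := by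
      funext i
      rw [hF, hG]
      rcases Fin.eq_castSucc_or_eq_last i with ⟨j, rfl⟩ | rfl
      · simp only [Fin.snoc_castSucc]
        rcases Fin.eq_castSucc_or_eq_last j with ⟨k, rfl⟩ | rfl
        · simp [Fin.snoc_castSucc, he]
        · simp [Fin.snoc_last]
      · simp [Fin.snoc_last]
    rw [hfun, hG, ofFn_snoc', ofFn_snoc', List.ofFn_const]
    unfold nuProd
    rw [List.foldl_append, List.foldl_append, foldl_rep]
    simp
    rfl
  -- Now compute LHS
  show (List.replicate (m + 1) e).foldr (· * ·) (φ a) = _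
  rw [List.replicate_succ', List.foldr_append]
  simp only [List.foldr_cons, List.foldr_nil]
  rw [foldr_rep, hA]
  unfold nuProd
  rw [mul_foldl]
  rw [List.ofFn_succ, List.foldl_cons]
  rw [show (0 : Fin (m+2)).succ = (1 : Fin (m+3)) from rfl]
  rw [← hB]
  rfl
end

section
/- Let A be a complex algebra and e ∈ A an n-potent (e^n = e), n ≥ 2. Set ω_k = exp(2πi(k−1)/(n−1)) for 1 ≤ k ≤ n−1 and ω₀ = 0. Then there exists a unique n-tuple of pairwise orthogonal idempotents (e₀, e₁, …, e_{n−1}) in the unitization Ã with e₀ + ⋯ + e_{n−1} = 1 and e = Σ_{k=1}^{n−1} ω_k e_k; moreover e₁, …, e_{n−1} lie in A. -/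
open Complex Finset

namespace NpotentAux

variable {B : Type*} [Ring B] [Algebra ℂ B]

noncomputable def S (m : ℕ) (a : B) (ν : ℂ) : B :=
  ∑ l ∈ Finset.range m, ν ^ (l + 1) • a ^ (l + 1)

variable {m : ℕ} {a : B} {ν μ : ℂ}

lemma smul_eq (hm : 0 < m) (ha : a ^ (m + 1) = a) (hν : ν ^ m = 1) :
    ν • (a * S m a ν) = S m a ν := by
  obtain ⟨m', rfl⟩ := Nat.exists_eq_succ_of_ne_zero hm.ne'
  have h1 : ν • (a * S (m' + 1) a ν)
      = ∑ l ∈ Finset.range (m' + 1), ν ^ (l + 1 + 1) • a ^ (l + 1 + 1) := by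
    rw [S, Finset.mul_sum, Finset.smul_sum]
    refine Finset.sum_congr rfl fun l _ => ?_
    rw [mul_smul_comm, ← pow_succ' a (l + 1), smul_smul, ← pow_succ']
  rw [h1, S, Finset.sum_range_succ, Finset.sum_range_succ']
  have h2 : ν ^ (m' + 1 + 1) • a ^ (m' + 1 + 1) = ν ^ (0 + 1) • a ^ (0 + 1) := by
    rw [ha, pow_succ, hν, one_mul, zero_add, pow_one, pow_one]
  rw [h2]

lemma mul_eq (hm : 0 < m) (ha : a ^ (m + 1) = a) (hν : ν ^ m = 1) :
    ν • (S m a ν * a) = S m a ν := by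
  obtain ⟨m', rfl⟩ := Nat.exists_eq_succ_of_ne_zero hm.ne'
  have h1 : ν • (S (m' + 1) a ν * a)
      = ∑ l ∈ Finset.range (m' + 1), ν ^ (l + 1 + 1) • a ^ (l + 1 + 1) := by
    rw [S, Finset.sum_mul, Finset.smul_sum]
    refine Finset.sum_congr rfl fun l _ => ?_
    rw [smul_mul_assoc, ← pow_succ a (l + 1), smul_smul, ← pow_succ']
  rw [h1, S, Finset.sum_range_succ, Finset.sum_range_succ']
  have h2 : ν ^ (m' + 1 + 1) • a ^ (m' + 1 + 1) = ν ^ (0 + 1) • a ^ (0 + 1) := by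
    rw [ha, pow_succ, hν, one_mul, zero_add, pow_one, pow_one]
  rw [h2]

lemma ne_zero_of_pow (hm : 0 < m) (hν : ν ^ m = 1) : ν ≠ 0 := by
  intro h; rw [h, zero_pow hm.ne'] at hν; exact zero_ne_one hν

lemma a_mul_S (hm : 0 < m) (ha : a ^ (m + 1) = a) (hν : ν ^ m = 1) :
    a * S m a ν = ν⁻¹ • S m a ν := by
  have h0 := ne_zero_of_pow hm hν
  calc a * S m a ν = ν⁻¹ • (ν • (a * S m a ν)) := by
        rw [smul_smul, inv_mul_cancel₀ h0, one_smul]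
    _ = ν⁻¹ • S m a ν := by rw [smul_eq hm ha hν]

lemma S_mul_a (hm : 0 < m) (ha : a ^ (m + 1) = a) (hν : ν ^ m = 1) :
    S m a ν * a = ν⁻¹ • S m a ν := by
  have h0 := ne_zero_of_pow hm hν
  calc S m a ν * a = ν⁻¹ • (ν • (S m a ν * a)) := by
        rw [smul_smul, inv_mul_cancel₀ h0, one_smul]
    _ = ν⁻¹ • S m a ν := by rw [mul_eq hm ha hν]

lemma pow_mul_S (hm : 0 < m) (ha : a ^ (m + 1) = a) (hν : ν ^ m = 1) (t : ℕ) :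
    a ^ t * S m a ν = (ν⁻¹) ^ t • S m a ν := by
  induction t with
  | zero => simp
  | succ t ih =>
      rw [pow_succ' a t, mul_assoc, ih, mul_smul_comm, a_mul_S hm ha hν,
        smul_smul, ← pow_succ]

lemma S_mul_pow (hm : 0 < m) (ha : a ^ (m + 1) = a) (hν : ν ^ m = 1) (t : ℕ) :
    S m a ν * a ^ t = (ν⁻¹) ^ t • S m a ν := by
  induction t with
  | zero => simp
  | succ t ih =>
      rw [pow_succ a t, ← mul_assoc, ih, smul_mul_assoc, S_mul_a hm ha hν,
        smul_smul, ← pow_succ]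

lemma S_mul_S (hm : 0 < m) (ha : a ^ (m + 1) = a) (hμ : μ ^ m = 1) (hν : ν ^ m = 1) :
    S m a μ * S m a ν = (∑ l ∈ Finset.range m, (μ * ν⁻¹) ^ (l + 1)) • S m a ν := by
  rw [S, Finset.sum_mul, Finset.sum_smul]
  refine Finset.sum_congr rfl fun l _ => ?_
  rw [smul_mul_assoc, pow_mul_S hm ha hν, smul_smul, mul_pow]

lemma geo_zero {r : ℂ} (hr : r ^ m = 1) (h1 : r ≠ 1) :
    ∑ l ∈ Finset.range m, r ^ (l + 1) = 0 := by
  have : ∑ l ∈ Finset.range m, r ^ (l + 1) = r * ∑ l ∈ Finset.range m, r ^ l := by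
    rw [Finset.mul_sum]; exact Finset.sum_congr rfl fun l _ => pow_succ' r l
  rw [this, geom_sum_eq h1, hr, sub_self, zero_div, mul_zero]

lemma geo_one : ∑ l ∈ Finset.range m, (1 : ℂ) ^ (l + 1) = (m : ℂ) := by
  simp

lemma rootgeo {η : ℂ} (hη : IsPrimitiveRoot η m) (t : ℕ) :
    ∑ k ∈ Finset.range m, (η ^ t) ^ k = if m ∣ t then (m : ℂ) else 0 := by
  by_cases h : m ∣ t
  · rw [if_pos h, (hη.pow_eq_one_iff_dvd t).2 h]; simp
  · rw [if_neg h]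
    have h1 : η ^ t ≠ 1 := fun hc => h ((hη.pow_eq_one_iff_dvd t).1 hc)
    rw [geom_sum_eq h1, ← pow_mul, mul_comm t m, pow_mul, hη.pow_eq_one, one_pow,
      sub_self, zero_div]

end NpotentAux

open NpotentAux

open Complex in
/-- Spectral decomposition of an `n`-potent in a complex algebra: if `e^n = e` then in
the unitization `Ã` there is a unique `n`-partition of unity `(e₀, …, e_{n-1})`
(pairwise orthogonal idempotents summing to `1`) with `e = Σ_{k=1}^{n-1} ω_k e_k`,
where `ω₀ = 0` and `ω_k = exp(2πi(k-1)/(n-1))`; moreover `e₁, …, e_{n-1}` lie in `A`. -/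
theorem npotent_partition_of_unity {A : Type*}
    [NonUnitalRing A] [Module ℂ A] [SMulCommClass ℂ A A] [IsScalarTower ℂ A A]
    (n : ℕ) (hn : 2 ≤ n) (e : A)
    (he : (e : Unitization ℂ A) ^ n = (e : Unitization ℂ A)) :
    (∃! es : Fin n → Unitization ℂ A,
        (∀ j, es j * es j = es j) ∧
        (∀ j k, j ≠ k → es j * es k = 0) ∧
        (∑ j : Fin n, es j) = 1 ∧
        (e : Unitization ℂ A) = ∑ j : Fin n,
          (if (j : ℕ) = 0 then (0 : ℂ)
            else Complex.exp (2 * Real.pi * Complex.I * (((j : ℕ) - 1 : ℕ) : ℂ)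
              / (((n - 1 : ℕ) : ℂ)))) • es j) ∧
    (∀ es : Fin n → Unitization ℂ A,
        ((∀ j, es j * es j = es j) ∧
        (∀ j k, j ≠ k → es j * es k = 0) ∧
        (∑ j : Fin n, es j) = 1 ∧
        (e : Unitization ℂ A) = ∑ j : Fin n,
          (if (j : ℕ) = 0 then (0 : ℂ)
            else Complex.exp (2 * Real.pi * Complex.I * (((j : ℕ) - 1 : ℕ) : ℂ)
              / (((n - 1 : ℕ) : ℂ)))) • es j) →
        ∀ j : Fin n, (j : ℕ) ≠ 0 → ∃ x : A, (x : Unitization ℂ A) = es j) := by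
  classical
  obtain ⟨m, rfl⟩ : ∃ m, n = m + 1 := ⟨n - 1, by omega⟩
  have hm : 0 < m := by omega
  set B := Unitization ℂ A with hBdef
  set a : B := (e : B) with hadef
  have ha : a ^ (m + 1) = a := he
  have hprim : IsPrimitiveRoot (Complex.exp (2 * Real.pi * Complex.I / m)) m :=
    Complex.isPrimitiveRoot_exp m hm.ne'
  set ζ : ℂ := Complex.exp (2 * Real.pi * Complex.I / m) with hζdef
  set η : ℂ := ζ⁻¹ with hηdef
  have hηprim : IsPrimitiveRoot η m := hprim.inv
  have hζm : ζ ^ m = 1 := hprim.pow_eq_one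
  have hηm : η ^ m = 1 := hηprim.pow_eq_one
  have hζ0 : ζ ≠ 0 := ne_zero_of_pow hm hζm
  have hmC : (m : ℂ) ≠ 0 := Nat.cast_ne_zero.2 hm.ne'
  set ω : Fin (m + 1) → ℂ := fun j => if (j : ℕ) = 0 then 0 else ζ ^ ((j : ℕ) - 1)
    with hωdef
  have hcoef : ∀ j : Fin (m + 1),
      (if (j : ℕ) = 0 then (0 : ℂ)
        else Complex.exp (2 * Real.pi * Complex.I * (((j : ℕ) - 1 : ℕ) : ℂ)
          / (((m + 1 - 1 : ℕ) : ℂ)))) = ω j := by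
    intro j
    by_cases h : (j : ℕ) = 0
    · simp [hωdef, h]
      exact Fin.ext (by simp [h])
    · rw [if_neg h, hωdef]
      simp only [if_neg h]
      have h1 : (m + 1 - 1 : ℕ) = m := rfl
      rw [h1, show 2 * Real.pi * Complex.I * (((j : ℕ) - 1 : ℕ) : ℂ) / (m : ℂ)
          = (((j : ℕ) - 1 : ℕ) : ℂ) * (2 * Real.pi * Complex.I / (m : ℂ)) by ring,
        Complex.exp_nat_mul, ← hζdef]
  set f : ℕ → B := fun k => (m : ℂ)⁻¹ • S m a (η ^ k) with hfdef
  have hνm : ∀ k : ℕ, (η ^ k) ^ m = 1 := fun k => by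
    rw [← pow_mul, mul_comm, pow_mul, hηm, one_pow]
  -- product of the f's
  have h_ff : ∀ j k : ℕ, f j * f k = if η ^ j = η ^ k then f k else 0 := by
    intro j k
    rw [hfdef]
    simp only
    rw [smul_mul_assoc, mul_smul_comm, S_mul_S hm ha (hνm j) (hνm k)]
    by_cases h : η ^ j = η ^ k
    · rw [if_pos h, h, mul_inv_cancel₀ (ne_zero_of_pow hm (hνm k))]
      rw [show ∑ l ∈ Finset.range m, (1 : ℂ) ^ (l + 1) = (m : ℂ) by simp]
      rw [smul_smul, smul_smul]
      congr 1
      field_simp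
    · rw [if_neg h]
      have hr : (η ^ j * (η ^ k)⁻¹) ^ m = 1 := by
        rw [mul_pow, hνm j, one_mul, inv_pow (η ^ k) m, hνm k, inv_one]
      have hr1 : η ^ j * (η ^ k)⁻¹ ≠ 1 := fun hc =>
        h ((mul_inv_eq_one₀ (ne_zero_of_pow hm (hνm k))).1 hc)
      rw [geo_zero hr hr1, zero_smul, smul_zero, smul_zero]
  -- sum of the S's
  have hSswap : ∀ c : ℕ → ℂ, ∑ k ∈ Finset.range m, c k • S m a (η ^ k)
      = ∑ l ∈ Finset.range m, (∑ k ∈ Finset.range m, c k * (η ^ (l + 1)) ^ k) • a ^ (l + 1) := by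
    intro c
    have step1 : ∀ k : ℕ, c k • S m a (η ^ k)
        = ∑ l ∈ Finset.range m, (c k * (η ^ (l + 1)) ^ k) • a ^ (l + 1) := by
      intro k
      rw [S, Finset.smul_sum]
      refine Finset.sum_congr rfl fun l _ => ?_
      rw [smul_smul]
      congr 2
      rw [← pow_mul, mul_comm k, pow_mul]
    calc ∑ k ∈ Finset.range m, c k • S m a (η ^ k)
        = ∑ k ∈ Finset.range m, ∑ l ∈ Finset.range m,
            (c k * (η ^ (l + 1)) ^ k) • a ^ (l + 1) := Finset.sum_congr rfl fun k _ => step1 k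
      _ = ∑ l ∈ Finset.range m, ∑ k ∈ Finset.range m,
            (c k * (η ^ (l + 1)) ^ k) • a ^ (l + 1) := Finset.sum_comm
      _ = ∑ l ∈ Finset.range m, (∑ k ∈ Finset.range m, c k * (η ^ (l + 1)) ^ k) • a ^ (l + 1) :=
          Finset.sum_congr rfl fun l _ => (Finset.sum_smul).symm
  -- sum of all S's
  have hSsum : ∑ k ∈ Finset.range m, S m a (η ^ k) = (m : ℂ) • a ^ m := by
    have h1 : ∑ k ∈ Finset.range m, S m a (η ^ k)
        = ∑ k ∈ Finset.range m, (1 : ℂ) • S m a (η ^ k) := by simp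
    rw [h1, hSswap]
    have h2 : ∀ l ∈ Finset.range m, (∑ k ∈ Finset.range m, 1 * (η ^ (l + 1)) ^ k) • a ^ (l + 1)
        = if l = m - 1 then (m : ℂ) • a ^ (l + 1) else 0 := by
      intro l hl
      rw [Finset.mem_range] at hl
      simp only [one_mul]
      rw [rootgeo hηprim (l + 1)]
      by_cases h : l = m - 1
      · rw [if_pos (show m ∣ l + 1 by exact ⟨1, by omega⟩), if_pos h]
      · rw [if_neg (show ¬ m ∣ l + 1 by
            intro hd; have := Nat.le_of_dvd (by omega) hd; omega), if_neg h, zero_smul]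
    rw [Finset.sum_congr rfl h2, Finset.sum_ite_eq' (Finset.range m) (m - 1)
      (fun l => (m : ℂ) • a ^ (l + 1))]
    rw [if_pos (Finset.mem_range.2 (by omega))]
    congr 2
    omega
  -- weighted sum of S's
  have hSa : ∑ k ∈ Finset.range m, ζ ^ k • S m a (η ^ k) = (m : ℂ) • a := by
    rw [hSswap]
    have h2 : ∀ l ∈ Finset.range m, (∑ k ∈ Finset.range m, ζ ^ k * (η ^ (l + 1)) ^ k) • a ^ (l + 1)
        = if l = 0 then (m : ℂ) • a ^ (l + 1) else 0 := by
      intro l hl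
      rw [Finset.mem_range] at hl
      have h3 : ∀ k : ℕ, ζ ^ k * (η ^ (l + 1)) ^ k = (η ^ l) ^ k := by
        intro k
        rw [← mul_pow]
        congr 1
        rw [hηdef, pow_succ' ζ⁻¹ l, ← mul_assoc, mul_inv_cancel₀ hζ0, one_mul]
      rw [Finset.sum_congr rfl fun k _ => h3 k, rootgeo hηprim l]
      by_cases h : l = 0
      · rw [if_pos h, if_pos (by simp [h])]
      · rw [if_neg (fun hd => h (Nat.eq_zero_of_dvd_of_lt hd hl ▸ rfl)), if_neg h, zero_smul]
    rw [Finset.sum_congr rfl h2, Finset.sum_ite_eq' (Finset.range m) 0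
      (fun l => (m : ℂ) • a ^ (l + 1))]
    rw [if_pos (Finset.mem_range.2 hm), zero_add, pow_one]
  -- sums of f's
  have hsum_f : ∑ k ∈ Finset.range m, f k = a ^ m := by
    rw [hfdef]
    simp only
    rw [← Finset.smul_sum, hSsum, smul_smul, inv_mul_cancel₀ hmC, one_smul]
  have h_e : ∑ k ∈ Finset.range m, ζ ^ k • f k = a := by
    rw [hfdef]
    simp only
    have h1 : ∀ k : ℕ, ζ ^ k • (m : ℂ)⁻¹ • S m a (η ^ k)
        = (m : ℂ)⁻¹ • ζ ^ k • S m a (η ^ k) := fun k => smul_comm _ _ _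
    rw [Finset.sum_congr rfl fun k _ => h1 k, ← Finset.smul_sum, hSa, smul_smul,
      inv_mul_cancel₀ hmC, one_smul]
  -- the idempotent p = a ^ m
  have hp : a ^ m * a ^ m = a ^ m := by
    have h1 : a ^ m * a ^ m = a ^ (m - 1) * a ^ (m + 1) := by
      rw [← pow_add, ← pow_add]
      congr 1
      omega
    rw [h1, ha, ← pow_succ]
    congr 1
    omega
  have hpf : ∀ k : ℕ, a ^ m * f k = f k := by
    intro k
    rw [hfdef]
    simp only
    rw [mul_smul_comm, pow_mul_S hm ha (hνm k) m, inv_pow (η ^ k) m, hνm k, inv_one, one_smul]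
  have hfp : ∀ k : ℕ, f k * a ^ m = f k := by
    intro k
    rw [hfdef]
    simp only
    rw [smul_mul_assoc, S_mul_pow hm ha (hνm k) m, inv_pow (η ^ k) m, hνm k, inv_one, one_smul]
  -- the candidate family
  set es : Fin (m + 1) → B := fun j => if (j : ℕ) = 0 then 1 - a ^ m else f ((j : ℕ) - 1)
    with hesdef
  have hes0 : es 0 = 1 - a ^ m := by simp [hesdef]
  have hesS : ∀ i : Fin m, es i.succ = f i := by
    intro i
    rw [hesdef]
    simp only [Fin.val_succ, Nat.add_sub_cancel, Nat.succ_ne_zero, if_false]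
  -- property 1 : idempotents
  have hP1 : ∀ j, es j * es j = es j := by
    intro j
    by_cases h : (j : ℕ) = 0
    · rw [hesdef]
      simp only [if_pos h]
      have h2 : (1 - a ^ m) * (1 - a ^ m) = 1 - a ^ m - a ^ m + a ^ m * a ^ m := by
        simp only [sub_mul, mul_sub, one_mul, mul_one]
        abel
      rw [h2, hp]
      abel
    · rw [hesdef]
      simp only [if_neg h]
      rw [h_ff, if_pos rfl]
  -- property 2 : orthogonality
  have hP2 : ∀ j k, j ≠ k → es j * es k = 0 := by
    intro j k hjk
    by_cases hj : (j : ℕ) = 0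
    · have hk : ¬(k : ℕ) = 0 := fun hk => hjk (by rw [Fin.ext_iff, hj, hk])
      rw [hesdef]
      simp only [if_pos hj, if_neg hk]
      rw [sub_mul, one_mul, hpf, sub_self]
    · by_cases hk : (k : ℕ) = 0
      · rw [hesdef]
        simp only [if_neg hj, if_pos hk]
        rw [mul_sub, mul_one, hfp, sub_self]
      · rw [hesdef]
        simp only [if_neg hj, if_neg hk]
        rw [h_ff, if_neg]
        intro hc
        have h1 : (j : ℕ) - 1 = (k : ℕ) - 1 :=
          hηprim.pow_inj (by omega) (by omega) hc
        exact hjk (by rw [Fin.ext_iff]; omega)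
  -- property 3 : partition of unity
  have hP3 : (∑ j : Fin (m + 1), es j) = 1 := by
    rw [Fin.sum_univ_succ, hes0, Finset.sum_congr rfl fun i _ => hesS i,
      Fin.sum_univ_eq_sum_range, hsum_f]
    abel
  -- property 4 : spectral decomposition
  have hP4 : a = ∑ j : Fin (m + 1), ω j • es j := by
    rw [Fin.sum_univ_succ]
    have h0 : ω 0 • es 0 = 0 := by
      rw [hωdef]; simp
    have h1 : ∀ i : Fin m, ω i.succ • es i.succ = ζ ^ (i : ℕ) • f i := by
      intro i
      rw [hωdef, hesS i]
      simp only [Fin.val_succ, Nat.add_sub_cancel, Nat.succ_ne_zero, if_false]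
    rw [h0, zero_add, Finset.sum_congr rfl fun i _ => h1 i,
      Fin.sum_univ_eq_sum_range (fun k => ζ ^ k • f k), h_e]
  -- uniqueness
  have huniq : ∀ q : Fin (m + 1) → B,
      ((∀ j, q j * q j = q j) ∧
        (∀ j k, j ≠ k → q j * q k = 0) ∧
        (∑ j : Fin (m + 1), q j) = 1 ∧
        a = ∑ j : Fin (m + 1), ω j • q j) → q = es := by
    intro q ⟨hq1, hq2, hq3, hq4⟩
    -- powers of a
    have hpow : ∀ t : ℕ, a ^ (t + 1) = ∑ j : Fin (m + 1), ω j ^ (t + 1) • q j := by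
      intro t
      induction t with
      | zero => simpa using hq4
      | succ t ih =>
          have h1 : a ^ (t + 1 + 1) = a ^ (t + 1) * a := by rw [pow_succ]
          rw [h1, ih, hq4, Finset.sum_mul]
          refine Finset.sum_congr rfl fun j _ => ?_
          rw [smul_mul_assoc, Finset.mul_sum]
          have h2 : ∀ k : Fin (m + 1), q j * ω k • q k = if k = j then ω j • q j else 0 := by
            intro k
            rw [mul_smul_comm]
            by_cases h : k = j
            · rw [if_pos h, h, hq1 j]
            · rw [if_neg h, hq2 j k (fun hc => h hc.symm), smul_zero]
          rw [Finset.sum_congr rfl fun k _ => h2 k, Finset.sum_ite_eq' Finset.univ j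
            (fun _ => ω j • q j), if_pos (Finset.mem_univ j), smul_smul]
          congr 1
    -- identification of the f's
    have hfq : ∀ k : ℕ, ∀ hk : k < m, f k = q ⟨k + 1, by omega⟩ := by
      intro k hk
      have hS : S m a (η ^ k) = ∑ j : Fin (m + 1),
          (∑ l ∈ Finset.range m, ((η ^ k) * ω j) ^ (l + 1)) • q j := by
        rw [S]
        have h1 : ∀ l : ℕ, (η ^ k) ^ (l + 1) • a ^ (l + 1)
            = ∑ j : Fin (m + 1), ((η ^ k) * ω j) ^ (l + 1) • q j := by
          intro l
          rw [hpow l, Finset.smul_sum]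
          refine Finset.sum_congr rfl fun j _ => ?_
          rw [smul_smul, ← mul_pow]
        rw [Finset.sum_congr rfl fun l _ => h1 l, Finset.sum_comm]
        refine Finset.sum_congr rfl fun j _ => ?_
        rw [Finset.sum_smul]
      have hcj : ∀ j : Fin (m + 1),
          (∑ l ∈ Finset.range m, ((η ^ k) * ω j) ^ (l + 1))
            = if j = (⟨k + 1, by omega⟩ : Fin (m + 1)) then (m : ℂ) else 0 := by
        intro j
        by_cases hj0 : (j : ℕ) = 0
        · rw [hωdef]
          simp only [if_pos hj0, mul_zero]
          rw [if_neg (by intro hc; rw [hc] at hj0; simp at hj0)]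
          refine Finset.sum_eq_zero fun l _ => ?_
          exact zero_pow (Nat.succ_ne_zero l)
        · rw [hωdef]
          simp only [if_neg hj0]
          by_cases hj : j = (⟨k + 1, by omega⟩ : Fin (m + 1))
          · rw [if_pos hj]
            have h2 : η ^ k * ζ ^ ((j : ℕ) - 1) = 1 := by
              have h3 : (j : ℕ) - 1 = k := by simp [hj]
              rw [h3, hηdef, ← mul_pow, inv_mul_cancel₀ hζ0, one_pow]
            rw [h2]
            simp
          · rw [if_neg hj]
            have hr : (η ^ k * ζ ^ ((j : ℕ) - 1)) ^ m = 1 := by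
              rw [mul_pow, hνm k, one_mul, ← pow_mul, mul_comm, pow_mul, hζm, one_pow]
            have hr1 : η ^ k * ζ ^ ((j : ℕ) - 1) ≠ 1 := by
              intro hc
              have h4 : ζ ^ ((j : ℕ) - 1) = ζ ^ k := by
                have h5 : η ^ k * ζ ^ k = 1 := by
                  rw [hηdef, ← mul_pow, inv_mul_cancel₀ hζ0, one_pow]
                exact (eq_inv_of_mul_eq_one_right hc).trans
                  (eq_inv_of_mul_eq_one_right h5).symm
              have h7 : (j : ℕ) - 1 = k := hprim.pow_inj (by omega) hk h4
              exact hj (by rw [Fin.ext_iff]; simp; omega)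
            exact geo_zero hr hr1
      rw [hfdef]
      simp only
      have hstep : ∀ j : Fin (m + 1), (∑ l ∈ Finset.range m, ((η ^ k) * ω j) ^ (l + 1)) • q j
          = if j = (⟨k + 1, by omega⟩ : Fin (m + 1)) then (m : ℂ) • q j else 0 := by
        intro j
        rw [hcj j, ite_smul, zero_smul]
      rw [hS, Finset.sum_congr rfl fun j _ => hstep j,
        Finset.sum_ite_eq' Finset.univ _ (fun j => (m : ℂ) • q j),
        if_pos (Finset.mem_univ _), smul_smul, inv_mul_cancel₀ hmC, one_smul]
    -- now identify q with es
    funext j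
    by_cases hj : (j : ℕ) = 0
    · have hj0 : j = 0 := Fin.ext hj
      rw [hj0, hes0]
      have h1 : q 0 + ∑ i : Fin m, q i.succ = 1 := by rw [← Fin.sum_univ_succ]; exact hq3
      have h2 : ∀ i : Fin m, q i.succ = f i := by
        intro i
        rw [hfq i i.isLt]
        congr 1
      rw [Finset.sum_congr rfl fun i _ => h2 i,
        Fin.sum_univ_eq_sum_range (fun k => f k) m, hsum_f] at h1
      exact eq_sub_of_add_eq h1
    · have hk : (j : ℕ) - 1 < m := by omega
      have h3 := hfq ((j : ℕ) - 1) hk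
      have h4 : (⟨(j : ℕ) - 1 + 1, by omega⟩ : Fin (m + 1)) = j := Fin.ext (by simp; omega)
      rw [h4] at h3
      rw [← h3, hesdef]
      simp only [if_neg hj]
  -- the fst of the f's vanishes
  have hafst : ∀ t : ℕ, (a ^ (t + 1)).fst = 0 := by
    intro t
    induction t with
    | zero => rw [pow_one, hadef]; exact Unitization.fst_inr ℂ e
    | succ t ih => rw [pow_succ, Unitization.fst_mul, ih, zero_mul]
  have hffst : ∀ k : ℕ, (f k).fst = 0 := by
    intro k
    rw [hfdef]
    simp only
    rw [Unitization.fst_smul, S]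
    have h1 : (∑ l ∈ Finset.range m, (η ^ k) ^ (l + 1) • a ^ (l + 1)).fst
        = ∑ l ∈ Finset.range m, ((η ^ k) ^ (l + 1) • a ^ (l + 1)).fst :=
      map_sum (Unitization.fstHom ℂ A) _ _
    rw [h1, Finset.sum_congr rfl fun l _ => by
      rw [Unitization.fst_smul, hafst l, smul_zero]]
    simp
  -- coefficient rewriting for sums
  have hcoe_sum : ∀ q : Fin (m + 1) → B,
      (∑ j : Fin (m + 1),
        (if (j : ℕ) = 0 then (0 : ℂ)
          else Complex.exp (2 * Real.pi * Complex.I * (((j : ℕ) - 1 : ℕ) : ℂ)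
            / (((m + 1 - 1 : ℕ) : ℂ)))) • q j) = ∑ j : Fin (m + 1), ω j • q j :=
    fun q => Finset.sum_congr rfl fun j _ => by rw [hcoef j]
  constructor
  · refine ⟨es, ⟨hP1, hP2, hP3, ?_⟩, ?_⟩
    · rw [hcoe_sum es, ← hP4]
    · intro q hq
      exact huniq q ⟨hq.1, hq.2.1, hq.2.2.1, by rw [← hcoe_sum q]; exact hq.2.2.2⟩
  · intro q hq j hj
    have hqes : q = es := huniq q ⟨hq.1, hq.2.1, hq.2.2.1, by rw [← hcoe_sum q]; exact hq.2.2.2⟩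
    have hfst : (q j).fst = 0 := by
      rw [hqes, hesdef]
      simp only [if_neg hj]
      exact hffst _
    refine ⟨(q j).snd, ?_⟩
    have h := Unitization.inl_fst_add_inr_snd_eq (q j)
    rw [hfst, Unitization.inl_zero, zero_add] at h
    exact h
end

section
/- Let φ : A → B be an involutive n-homomorphism of C*-algebras and 1 ≤ k ≤ n. If a₁⋯a_k = b₁⋯b_k in A, then φ(a₁)⋯φ(a_k) = φ(b₁)⋯φ(b_k) in B (Coherent Factorization Lemma). -/
lemma nuProd_append_singleton {α : Type*} [Mul α] (x : α) (l : List α) (e : α) :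
    nuProd x (l ++ [e]) = nuProd x l * e := by
  simp [nuProd]

lemma exists_ofFn {α : Type*} (m : ℕ) (l : List α) (h : l.length = m) :
    ∃ f : Fin m → α, l = List.ofFn f := by
  subst h
  exact ⟨l.get, (List.ofFn_get l).symm⟩

theorem coherent_aux {A B : Type*}
    [NonUnitalNormedRing A] [StarRing A] [CStarRing A] [CompleteSpace A]
    [NormedSpace ℂ A] [IsScalarTower ℂ A A] [SMulCommClass ℂ A A] [StarModule ℂ A]
    [NonUnitalNormedRing B] [StarRing B] [CStarRing B] [CompleteSpace B]
    [NormedSpace ℂ B] [IsScalarTower ℂ B B] [SMulCommClass ℂ B B] [StarModule ℂ B]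
    (n : ℕ) (φ : A →ₗ[ℂ] B)
    (hmul' : ∀ (x : A) (l : List A), l.length = n - 1 →
      φ (nuProd x l) = nuProd (φ x) (l.map φ))
    (hstar : ∀ a : A, φ (star a) = star (φ a)) :
    ∀ (d m : ℕ), m + d = n - 1 →
      ∀ (x y : A) (l l' : List A), l.length = m → l'.length = m →
        nuProd x l = nuProd y l' →
        nuProd (φ x) (l.map φ) = nuProd (φ y) (l'.map φ) := by
  intro d
  induction d with
  | zero =>
    intro m hm x y l l' hl hl' h
    rw [← hmul' x l (by omega), ← hmul' y l' (by omega), h]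
  | succ d ih =>
    intro m hm x y l l' hl hl' h
    set P := nuProd (φ x) (l.map φ) with hPdef
    set Q := nuProd (φ y) (l'.map φ) with hQdef
    have hann : ∀ e : A, (P - Q) * φ e = 0 := by
      intro e
      have h2 : nuProd x (l ++ [e]) = nuProd y (l' ++ [e]) := by
        rw [nuProd_append_singleton, nuProd_append_singleton, h]
      have := ih (m + 1) (by omega) x y (l ++ [e]) (l' ++ [e])
        (by simp [hl]) (by simp [hl']) h2
      rw [List.map_append, List.map_append] at this
      simp only [List.map_cons, List.map_nil] at this
      rw [nuProd_append_singleton, nuProd_append_singleton] at this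
      rw [sub_mul, ← hPdef, ← hQdef] at *
      rw [this, sub_self]
    -- D * star of any nuProd (φ z) (map φ r) is zero
    have key : ∀ (z : A) (r : List A),
        (P - Q) * star (nuProd (φ z) (r.map φ)) = 0 := by
      intro z r
      rcases r.eq_nil_or_concat with rfl | ⟨r₀, c, rfl⟩
      · simp only [List.map_nil, nuProd, List.foldl_nil]
        rw [← hstar, hann]
      · rw [List.concat_eq_append, List.map_append, List.map_cons, List.map_nil,
          nuProd_append_singleton, star_mul, ← mul_assoc, ← hstar, hann, zero_mul]
    have hD : (P - Q) * star (P - Q) = 0 := by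
      rw [star_sub, mul_sub, hPdef, hQdef, key x l, key y l', sub_zero]
    have hD0 : P - Q = 0 := by
      have h1 : star (star (P - Q)) * star (P - Q) = 0 := by rw [star_star]; exact hD
      have h2 := CStarRing.norm_star_mul_self (x := star (P - Q))
      rw [h1, norm_zero] at h2
      have h3 : ‖star (P - Q)‖ = 0 := by nlinarith [norm_nonneg (star (P - Q))]
      exact star_eq_zero.mp (norm_eq_zero.mp h3)
    exact sub_eq_zero.mp hD0

/-- Coherent Factorization Lemma: if `φ : A → B` is an involutive `n`-homomorphism of
C*-algebras and `1 ≤ k ≤ n`, then `a₁⋯a_k = b₁⋯b_k` implies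
`φ(a₁)⋯φ(a_k) = φ(b₁)⋯φ(b_k)`. -/
theorem coherent_factorization {A B : Type*}
    [NonUnitalNormedRing A] [StarRing A] [CStarRing A] [CompleteSpace A]
    [NormedSpace ℂ A] [IsScalarTower ℂ A A] [SMulCommClass ℂ A A] [StarModule ℂ A]
    [NonUnitalNormedRing B] [StarRing B] [CStarRing B] [CompleteSpace B]
    [NormedSpace ℂ B] [IsScalarTower ℂ B B] [SMulCommClass ℂ B B] [StarModule ℂ B]
    (n : ℕ) (hn : 2 ≤ n) (φ : A →ₗ[ℂ] B)
    (hmul : ∀ (x : A) (f : Fin (n - 1) → A),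
      φ (nuProd x (List.ofFn f)) = nuProd (φ x) (List.ofFn fun i => φ (f i)))
    (hstar : ∀ a : A, φ (star a) = star (φ a)) :
    ∀ (k : ℕ), 1 ≤ k → k ≤ n →
      ∀ (x y : A) (f g : Fin (k - 1) → A),
        nuProd x (List.ofFn f) = nuProd y (List.ofFn g) →
        nuProd (φ x) (List.ofFn fun i => φ (f i))
          = nuProd (φ y) (List.ofFn fun i => φ (g i)) := by
  have hmul' : ∀ (x : A) (l : List A), l.length = n - 1 →
      φ (nuProd x l) = nuProd (φ x) (l.map φ) := by
    intro x l hl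
    obtain ⟨f, rfl⟩ := exists_ofFn (n - 1) l hl
    rw [hmul, List.map_ofFn]
    rfl
  intro k hk1 hkn x y f g h
  have := coherent_aux n φ hmul' hstar (n - k) (k - 1) (by omega) x y
    (List.ofFn f) (List.ofFn g) (by simp) (by simp) h
  simpa [List.map_ofFn, Function.comp_def] using this
end

section
/- Let φ : A → B be an involutive n-homomorphism of C*-algebras with n ≥ 2 even. Then φ is a *-homomorphism: φ(ab) = φ(a)φ(b) for all a, b ∈ A. -/
set_option synthInstance.maxHeartbeats 1000000
set_option maxHeartbeats 1000000
open Topology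
open scoped NNReal

namespace EvenNHom

lemma nuProd_nil {α : Type*} [Mul α] (x : α) : nuProd x [] = x := rfl

lemma nuProd_append {α : Type*} [Mul α] (x : α) (l₁ l₂ : List α) :
    nuProd x (l₁ ++ l₂) = nuProd (nuProd x l₁) l₂ :=
  List.foldl_append ..

lemma nuProd_singleton {α : Type*} [Mul α] (x y : α) : nuProd x [y] = x * y := rfl

lemma nuProd_replicate_succ {α : Type*} [Mul α] (x y : α) (m : ℕ) :
    nuProd x (List.replicate (m + 1) y) = nuProd x (List.replicate m y) * y := by
  rw [List.replicate_succ', nuProd_append, nuProd_singleton]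

lemma map_nuProd {α β F : Type*} [Mul α] [Mul β] [FunLike F α β] [MulHomClass F α β]
    (f : F) (l : List α) (x : α) :
    f (nuProd x l) = nuProd (f x) (l.map f) := by
  induction l generalizing x with
  | nil => rfl
  | cons a l ih => simpa [nuProd] using ih (x * a)

lemma nuProd_replicate_pow {M : Type*} [Monoid M] (x y : M) (m : ℕ) :
    nuProd x (List.replicate m y) = x * y ^ m := by
  induction m with
  | zero => simp [nuProd_nil]
  | succ m ih => rw [nuProd_replicate_succ, ih, pow_succ, mul_assoc]

noncomputable def cstarOrder (A : Type*) [NonUnitalCStarAlgebra A] : PartialOrder A :=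
  letI : PartialOrder (Unitization ℂ A) := CStarAlgebra.spectralOrder _
  PartialOrder.lift (Unitization.inr : A → Unitization ℂ A) Unitization.inr_injective

lemma cstarOrder_starOrderedRing (A : Type*) [NonUnitalCStarAlgebra A] :
    letI := cstarOrder A
    StarOrderedRing A := by
  letI pO : PartialOrder (Unitization ℂ A) := CStarAlgebra.spectralOrder _
  haveI := CStarAlgebra.spectralOrderedRing (Unitization ℂ A)
  letI := cstarOrder A
  refine StarOrderedRing.of_nonneg_iff' (fun {x y} h z => ?_) (fun x => ?_)
  · show ((z + x : A) : Unitization ℂ A) ≤ ((z + y : A) : Unitization ℂ A)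
    rw [Unitization.inr_add, Unitization.inr_add]
    have h' : (x : Unitization ℂ A) ≤ (y : Unitization ℂ A) := h
    exact add_le_add_right h' _
  · constructor
    · intro hx
      have hx' : (0 : Unitization ℂ A) ≤ (x : Unitization ℂ A) := by
        have : ((0 : A) : Unitization ℂ A) ≤ (x : Unitization ℂ A) := hx
        simpa using this
      have hsa : IsSelfAdjoint x :=
        (Unitization.isSelfAdjoint_inr (R := ℂ)).mp (.of_nonneg hx')
      have hqs : ∀ t ∈ quasispectrum ℝ x, 0 ≤ t := by
        rw [Unitization.quasispectrum_eq_spectrum_inr' ℝ ℂ x]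
        exact fun t ht => spectrum_nonneg_of_nonneg hx' ht
      refine ⟨cfcₙ Real.sqrt x, ?_⟩
      have hsa' : IsSelfAdjoint (cfcₙ Real.sqrt x) := cfcₙ_predicate _ x
      rw [hsa'.star_eq]
      rw [← cfcₙ_mul _ _ x]
      rw [cfcₙ_congr (f := fun t => Real.sqrt t * Real.sqrt t) (g := fun t => t)
        (fun t ht => Real.mul_self_sqrt (hqs t ht))]
      exact (cfcₙ_id' ℝ x).symm
    · rintro ⟨s, rfl⟩
      show ((0 : A) : Unitization ℂ A) ≤ ((star s * s : A) : Unitization ℂ A)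
      rw [Unitization.inr_zero, Unitization.inr_mul, Unitization.inr_star]
      exact star_mul_self_nonneg _


/-- `APow y m = y * y * ⋯ * y` with `m + 1` factors. -/
def APow {α : Type*} [Mul α] (y : α) (m : ℕ) : α := nuProd y (List.replicate m y)

lemma APow_succ {α : Type*} [Mul α] (y : α) (m : ℕ) :
    APow y (m + 1) = APow y m * y := nuProd_replicate_succ ..

lemma inr_nuProd {A : Type*} [NonUnitalCStarAlgebra A] (x : A) (l : List A) :
    (↑(nuProd x l) : Unitization ℂ A)
      = nuProd (x : Unitization ℂ A) (l.map (Unitization.inr : A → Unitization ℂ A)) := by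
  simpa [show (⇑(Unitization.inrNonUnitalStarAlgHom ℂ A) : A → Unitization ℂ A) = Unitization.inr from rfl] using map_nuProd (Unitization.inrNonUnitalStarAlgHom ℂ A) l x

lemma inr_APow {A : Type*} [NonUnitalCStarAlgebra A] (y : A) (m : ℕ) :
    (↑(APow y m) : Unitization ℂ A) = (y : Unitization ℂ A) ^ (m + 1) := by
  rw [APow, inr_nuProd, List.map_replicate, nuProd_replicate_pow, pow_succ']

/-- Iterated `n`-th power. -/
def iterPow {α : Type*} [Mul α] (q : α) (k : ℕ) : ℕ → α
  | 0 => q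
  | (j + 1) => APow (iterPow q k j) k

lemma ofFn_get_cast {α : Type*} (l : List α) {m : ℕ} (h : l.length = m) :
    List.ofFn (fun i : Fin m => l.get (Fin.cast h.symm i)) = l := by
  subst h; simp

section main

variable {A B : Type*} [NonUnitalCStarAlgebra A] [PartialOrder A] [StarOrderedRing A]
  [NonUnitalCStarAlgebra B] [PartialOrder B] [StarOrderedRing B]
  {n : ℕ} (hn : 2 ≤ n) (heven : Even n) (φ : A →ₗ[ℂ] B)
  (hmul : ∀ (x : A) (f : Fin (n - 1) → A),
      φ (nuProd x (List.ofFn f)) = nuProd (φ x) (List.ofFn fun i => φ (f i)))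
  (hstar : ∀ a : A, φ (star a) = star (φ a))

include hmul in
lemma key (x : A) (l : List A) (hl : l.length = n - 1) :
    φ (nuProd x l) = nuProd (φ x) (l.map φ) := by
  have h := hmul x (fun i => l.get (Fin.cast hl.symm i))
  rw [ofFn_get_cast l hl] at h
  rw [h]
  have h2 : (List.ofFn fun i : Fin (n-1) => φ ((fun i => l.get (Fin.cast hl.symm i)) i))
      = List.map φ (List.ofFn fun i : Fin (n-1) => l.get (Fin.cast hl.symm i)) := by
    simp [List.map_ofFn]; rfl
  rw [h2, ofFn_get_cast l hl]

include hmul in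
lemma phi_APow (y : A) : φ (APow y (n - 1)) = APow (φ y) (n - 1) := by
  have h := key φ hmul y (List.replicate (n - 1) y) (by simp)
  simpa [APow, List.map_replicate] using h

include hstar in
lemma phi_isSelfAdjoint {y : A} (hy : IsSelfAdjoint y) : IsSelfAdjoint (φ y) := by
  rw [IsSelfAdjoint, ← hstar y, hy.star_eq]

include hn heven hmul hstar in
lemma phi_nonneg (a : A) (ha : 0 ≤ a) : 0 ≤ φ a := by
  obtain ⟨m, hm⟩ := heven
  set b := a ^ ((n : ℝ≥0))⁻¹ with hbdef
  have hb0 : 0 ≤ b := CFC.nnrpow_nonneg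
  have hnpos : (0 : ℝ≥0) < ((n : ℝ≥0))⁻¹ := by
    rw [inv_pos]
    exact_mod_cast (by omega : 0 < n)
  have hpow : ∀ j : ℕ, APow b j = a ^ (((j : ℝ≥0) + 1) * ((n : ℝ≥0))⁻¹) := by
    intro j
    induction j with
    | zero => simp [APow, nuProd_nil, hbdef, one_mul]
    | succ j ih =>
      rw [APow_succ, ih, hbdef]
      have e1 : (((j : ℝ≥0) + 1) + 1) * ((n : ℝ≥0))⁻¹
          = ((j : ℝ≥0) + 1) * ((n : ℝ≥0))⁻¹ + ((n : ℝ≥0))⁻¹ := by ring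
      have e2 : ((j + 1 : ℕ) : ℝ≥0) = (j : ℝ≥0) + 1 := by push_cast; ring
      rw [e2, e1, CFC.nnrpow_add (by positivity) hnpos]
  have hb_n : APow b (n - 1) = a := by
    rw [hpow]
    have e3 : (((n - 1 : ℕ) : ℝ≥0) + 1) * ((n : ℝ≥0))⁻¹ = 1 := by
      have : ((n - 1 : ℕ) : ℝ≥0) + 1 = (n : ℝ≥0) := by
        have : (n - 1) + 1 = n := by omega
        exact_mod_cast congrArg (Nat.cast : ℕ → ℝ≥0) this
      rw [this, mul_inv_cancel₀ (by exact_mod_cast (by omega : n ≠ 0))]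
    rw [e3, CFC.nnrpow_one a ha]
  have hφb : IsSelfAdjoint (φ b) := phi_isSelfAdjoint φ hstar (.of_nonneg hb0)
  have h1 : φ a = APow (φ b) (n - 1) := by rw [← hb_n, phi_APow φ hmul]
  rw [← Unitization.inr_nonneg_iff, h1, inr_APow]
  have hn1 : n - 1 + 1 = m + m := by omega
  rw [hn1, pow_add]
  have hsa : IsSelfAdjoint ((φ b : Unitization ℂ B) ^ m) :=
    ((Unitization.isSelfAdjoint_inr (R := ℂ)).mpr hφb).pow m
  nth_rewrite 1 [← hsa.star_eq]
  exact star_mul_self_nonneg _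

lemma norm_pow_le_of_sa {C : Type*} [CStarAlgebra C] {q : C} (hq : IsSelfAdjoint q)
    (m : ℕ) (hm : 1 ≤ m) : ‖q‖ ^ m ≤ ‖q ^ m‖ := by
  by_cases hq0 : ‖q‖ = 0
  · rw [norm_eq_zero] at hq0
    subst hq0
    simp [zero_pow (by omega : m ≠ 0)]
  have hqpos : 0 < ‖q‖ := (norm_nonneg q).lt_of_ne (Ne.symm hq0)
  have h2 : ∀ i : ℕ, ‖q ^ (2 ^ i)‖ = ‖q‖ ^ (2 ^ i) := by
    intro i
    induction i with
    | zero => simp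
    | succ i ih =>
      have e : q ^ (2 ^ (i + 1)) = q ^ (2 ^ i) * q ^ (2 ^ i) := by
        rw [← pow_add]
        congr 1
        omega
      have hsa : IsSelfAdjoint (q ^ (2 ^ i)) := hq.pow _
      rw [e]
      nth_rewrite 1 [← hsa.star_eq]
      rw [CStarRing.norm_star_mul_self, ih, ← pow_add]
      congr 1
      omega
  obtain ⟨i, hi⟩ : ∃ i, m ≤ 2 ^ i := ⟨m, (Nat.lt_two_pow_self (n := m)).le⟩
  rcases Nat.eq_or_lt_of_le hi with heq | hlt
  · rw [heq]
    exact (h2 i).ge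
  have hr : 0 < 2 ^ i - m := by omega
  set j := 2 ^ i - m with hj
  have hmj : m + j = 2 ^ i := by omega
  have key : ‖q‖ ^ (m + j) ≤ ‖q ^ m‖ * ‖q‖ ^ j := by
    rw [hmj, ← h2 i, ← hmj, pow_add]
    refine (norm_mul_le _ _).trans ?_
    gcongr
    exact norm_pow_le' q hr
  rw [pow_add] at key
  exact (mul_le_mul_iff_of_pos_right (pow_pos hqpos j)).mp key

include hn heven hmul hstar in
lemma exists_bound : ∃ M : ℝ, 1 ≤ M ∧ ∀ x : A, 0 ≤ x → ‖x‖ ≤ 1 → ‖φ x‖ ≤ M := by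
  by_contra hcon
  push_neg at hcon
  have hsel : ∀ k : ℕ, ∃ x : A, 0 ≤ x ∧ ‖x‖ ≤ 1 ∧ (4 : ℝ) ^ k < ‖φ x‖ := by
    intro k
    obtain ⟨x, h1, h2, h3⟩ := hcon (max 1 ((4 : ℝ) ^ k)) (le_max_left _ _)
    exact ⟨x, h1, h2, lt_of_le_of_lt (le_max_right _ _) h3⟩
  choose g hg0 hg1 hg4 using hsel
  have hsum : Summable (fun k : ℕ => ((2 : ℝ)⁻¹) ^ k • g k) := by
    refine Summable.of_norm_bounded (g := fun k => ((2 : ℝ)⁻¹) ^ k)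
      (summable_geometric_of_lt_one (by norm_num) (by norm_num)) fun k => ?_
    rw [norm_smul, Real.norm_eq_abs, abs_of_pos (by positivity)]
    have h1 := hg1 k
    have h2 : (0 : ℝ) ≤ ((2 : ℝ)⁻¹) ^ k := by positivity
    have h3 : (0 : ℝ) ≤ ‖g k‖ := norm_nonneg _
    nlinarith
  set s := ∑' k, ((2 : ℝ)⁻¹) ^ k • g k with hs
  haveI : OrderClosedTopology A := by
    refine ⟨?_⟩
    have hset : {p : A × A | p.1 ≤ p.2} = (fun p : A × A => p.2 - p.1) ⁻¹' {x | 0 ≤ x} := by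
      ext p
      simp [sub_nonneg]
    rw [hset]
    exact CStarAlgebra.isClosed_nonneg.preimage (continuous_snd.sub continuous_fst)
  have hterm : ∀ k, 0 ≤ ((2 : ℝ)⁻¹) ^ k • g k := fun k => smul_nonneg (by positivity) (hg0 k)
  have hle : ∀ k, ((2 : ℝ)⁻¹) ^ k • g k ≤ s := by
    intro k
    have h := hsum.sum_le_tsum ({k} : Finset ℕ) (fun j _ => hterm j)
    simpa [hs] using h
  have hmono : ∀ k, ‖φ (((2 : ℝ)⁻¹) ^ k • g k)‖ ≤ ‖φ s‖ := by
    intro k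
    have h1 : 0 ≤ φ (((2 : ℝ)⁻¹) ^ k • g k) := phi_nonneg hn heven φ hmul hstar _ (hterm k)
    have h2 : 0 ≤ φ s - φ (((2 : ℝ)⁻¹) ^ k • g k) := by
      have h3 := phi_nonneg hn heven φ hmul hstar (s - ((2 : ℝ)⁻¹) ^ k • g k)
        (by rw [sub_nonneg]; exact hle k)
      rwa [map_sub] at h3
    rw [sub_nonneg] at h2
    have h4 : 0 ≤ ‖φ s‖ := norm_nonneg _
    exact CStarAlgebra.norm_le_norm_of_nonneg_of_le h1 h2
  have hgrow : ∀ k, (2 : ℝ) ^ k < ‖φ s‖ := by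
    intro k
    have h := hmono k
    rw [LinearMap.map_smul_of_tower, norm_smul, Real.norm_eq_abs,
      abs_of_pos (by positivity)] at h
    have hpos : (0 : ℝ) < ((2 : ℝ)⁻¹) ^ k := by positivity
    calc (2 : ℝ) ^ k = ((2 : ℝ)⁻¹) ^ k * (4 : ℝ) ^ k := by
          rw [← mul_pow]
          norm_num
      _ < ((2 : ℝ)⁻¹) ^ k * ‖φ (g k)‖ := by
          exact mul_lt_mul_of_pos_left (hg4 k) hpos
      _ ≤ ‖φ s‖ := h
  obtain ⟨k, hk⟩ := pow_unbounded_of_one_lt ‖φ s‖ (by norm_num : (1 : ℝ) < 2)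
  exact absurd (hgrow k) (not_lt.mpr hk.le)

include hn heven hmul hstar in
lemma phi_norm_le_one_of_pos {M : ℝ} (hM : ∀ x : A, 0 ≤ x → ‖x‖ ≤ 1 → ‖φ x‖ ≤ M)
    (q : A) (hq0 : 0 ≤ q) (hq1 : ‖q‖ ≤ 1) : ‖φ q‖ ≤ 1 := by
  by_contra hgt
  push_neg at hgt
  set r : ℕ → A := iterPow q (n - 1) with hrdef
  have hr_succ : ∀ j, r (j + 1) = APow (r j) (n - 1) := fun _ => rfl
  have hr_zero : r 0 = q := rfl
  have hn1 : n - 1 + 1 = n := by omega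
  have hrcast : ∀ j, ((r j : Unitization ℂ A)) = (q : Unitization ℂ A) ^ (n ^ j) := by
    intro j
    induction j with
    | zero => rw [hr_zero]; simp
    | succ j ih =>
      rw [hr_succ, inr_APow, hn1, ih, ← pow_mul, ← pow_succ]
  have hq0' : (0 : Unitization ℂ A) ≤ (q : Unitization ℂ A) := Unitization.inr_nonneg_iff.mpr hq0
  have hr0 : ∀ j, 0 ≤ r j := fun j => by
    rw [← Unitization.inr_nonneg_iff, hrcast]
    exact CStarAlgebra.pow_nonneg hq0' _
  have hr1 : ∀ j, ‖r j‖ ≤ 1 := fun j => by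
    rw [← Unitization.norm_inr (𝕜 := ℂ), hrcast]
    calc ‖(q : Unitization ℂ A) ^ n ^ j‖ ≤ ‖(q : Unitization ℂ A)‖ ^ n ^ j :=
          norm_pow_le' _ (by positivity)
      _ ≤ 1 := pow_le_one₀ (norm_nonneg _) (by rwa [Unitization.norm_inr])
  have hφr : ∀ j, ((φ (r j) : Unitization ℂ B)) = ((φ q : Unitization ℂ B)) ^ (n ^ j) := by
    intro j
    induction j with
    | zero => rw [hr_zero]; simp
    | succ j ih =>
      rw [hr_succ, phi_APow φ hmul, inr_APow, hn1, ih, ← pow_mul, ← pow_succ]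
  have hsa : IsSelfAdjoint ((φ q : Unitization ℂ B)) :=
    (Unitization.isSelfAdjoint_inr (R := ℂ)).mpr
      (phi_isSelfAdjoint φ hstar (.of_nonneg hq0))
  have hbound : ∀ j, ‖φ q‖ ^ (n ^ j) ≤ M := by
    intro j
    have h6 := norm_pow_le_of_sa hsa (n ^ j) (Nat.one_le_pow _ _ (by omega))
    rw [← hφr j, Unitization.norm_inr, Unitization.norm_inr] at h6
    exact h6.trans (hM (r j) (hr0 j) (hr1 j))
  obtain ⟨k, hk⟩ := pow_unbounded_of_one_lt M hgt
  have hkn : ‖φ q‖ ^ k ≤ ‖φ q‖ ^ (n ^ k) :=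
    pow_le_pow_right₀ hgt.le (Nat.le_of_lt (Nat.lt_pow_self (n := k) (by omega : 1 < n)))
  linarith [hbound k]

include hn heven hmul hstar in
lemma phi_cont : Continuous φ := by
  obtain ⟨M, hM1, hM⟩ := exists_bound hn heven φ hmul hstar
  have hposb : ∀ q : A, 0 ≤ q → ‖φ q‖ ≤ M * ‖q‖ := by
    intro q hq
    rcases eq_or_ne q 0 with rfl | hq0
    · simp
    · have hnq : 0 < ‖q‖ := norm_pos_iff.mpr hq0
      have h1 : 0 ≤ (‖q‖⁻¹ : ℝ) • q := smul_nonneg (by positivity) hq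
      have h2 : ‖(‖q‖⁻¹ : ℝ) • q‖ ≤ 1 := by
        rw [norm_smul, Real.norm_eq_abs, abs_of_pos (by positivity),
          inv_mul_cancel₀ hnq.ne']
      have h3 := hM _ h1 h2
      rw [LinearMap.map_smul_of_tower, norm_smul, Real.norm_eq_abs,
        abs_of_pos (by positivity)] at h3
      calc ‖φ q‖ = ‖q‖ * (‖q‖⁻¹ * ‖φ q‖) := by field_simp
        _ ≤ ‖q‖ * M := mul_le_mul_of_nonneg_left h3 hnq.le
        _ = M * ‖q‖ := mul_comm _ _
  have hsab : ∀ x : A, IsSelfAdjoint x → ‖φ x‖ ≤ 2 * M * ‖x‖ := by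
    intro x hx
    have hqs : ∀ t ∈ quasispectrum ℝ x, ‖t‖ ≤ ‖x‖ := by
      intro t ht
      rw [Unitization.quasispectrum_eq_spectrum_inr' ℝ ℂ x] at ht
      simpa [Unitization.norm_inr] using spectrum.norm_le_norm_of_mem ht
    have hxp : ‖(x⁺ : A)‖ ≤ ‖x‖ := by
      rw [CFC.posPart_def]
      refine norm_cfcₙ_le fun t ht => ?_
      have h1 := hqs t ht
      rw [Real.norm_eq_abs] at h1 ⊢
      rw [_root_.posPart_def]
      rw [abs_of_nonneg (le_max_right t 0)]
      exact (max_le (le_abs_self t) (abs_nonneg t)).trans h1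
    have hxn : ‖(x⁻ : A)‖ ≤ ‖x‖ := by
      rw [CFC.negPart_def]
      refine norm_cfcₙ_le fun t ht => ?_
      have h1 := hqs t ht
      rw [Real.norm_eq_abs] at h1 ⊢
      rw [_root_.negPart_def]
      rw [abs_of_nonneg (le_max_right (-t) 0)]
      exact (max_le (abs_neg t ▸ le_abs_self (-t)) (abs_nonneg t)).trans h1
    have hde : x = x⁺ - x⁻ := (CFC.posPart_sub_negPart x hx).symm
    calc ‖φ x‖ = ‖φ x⁺ - φ x⁻‖ := by rw [← map_sub, ← hde]
      _ ≤ ‖φ x⁺‖ + ‖φ x⁻‖ := norm_sub_le _ _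
      _ ≤ M * ‖x⁺‖ + M * ‖x⁻‖ := by
          gcongr
          · exact hposb _ (CFC.posPart_nonneg x)
          · exact hposb _ (CFC.negPart_nonneg x)
      _ ≤ M * ‖x‖ + M * ‖x‖ := by
          have hM0 : (0:ℝ) ≤ M := by linarith
          gcongr
      _ = 2 * M * ‖x‖ := by ring
  have hgen : ∀ x : A, ‖φ x‖ ≤ 4 * M * ‖x‖ := by
    intro x
    set h := (2⁻¹ : ℝ) • (x + star x) with hh
    set k := (2⁻¹ : ℝ) • (Complex.I • (star x - x)) with hk
    have hhsa : IsSelfAdjoint h := by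
      rw [hh, IsSelfAdjoint, star_smul, star_trivial, star_add, star_star, add_comm]
    have hksa : IsSelfAdjoint k := by
      rw [hk, IsSelfAdjoint, star_smul, star_trivial, star_smul, star_sub, star_star,
        Complex.star_def, Complex.conj_I, neg_smul, ← smul_neg, neg_sub]
    have hIk : Complex.I • k = (2⁻¹ : ℝ) • (x - star x) := by
      rw [hk, smul_comm, smul_smul, Complex.I_mul_I, neg_one_smul, neg_sub]
    have hdecomp : x = h + Complex.I • k := by
      rw [hh, hIk, ← smul_add]
      have e : x + star x + (x - star x) = (2 : ℝ) • x := by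
        rw [two_smul]
        abel
      rw [e, smul_smul]
      norm_num
    have hhn : ‖h‖ ≤ ‖x‖ := by
      rw [hh, norm_smul, Real.norm_eq_abs]
      calc |(2⁻¹ : ℝ)| * ‖x + star x‖ ≤ 2⁻¹ * (‖x‖ + ‖star x‖) := by
            rw [abs_of_pos (by norm_num)]
            gcongr
            exact norm_add_le _ _
        _ = ‖x‖ := by rw [norm_star]; ring
    have hkn : ‖k‖ ≤ ‖x‖ := by
      rw [hk, norm_smul, norm_smul, Real.norm_eq_abs, Complex.norm_I, one_mul,
        abs_of_pos (by norm_num : (0:ℝ) < 2⁻¹)]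
      calc (2⁻¹ : ℝ) * ‖star x - x‖ ≤ 2⁻¹ * (‖star x‖ + ‖x‖) := by
            gcongr
            exact norm_sub_le _ _
        _ = ‖x‖ := by rw [norm_star]; ring
    have : φ x = φ h + Complex.I • φ k := by
      conv_lhs => rw [hdecomp]
      rw [map_add]
      congr 1
      exact map_smul φ Complex.I k
    rw [this]
    calc ‖φ h + Complex.I • φ k‖ ≤ ‖φ h‖ + ‖Complex.I • φ k‖ := norm_add_le _ _
      _ = ‖φ h‖ + ‖φ k‖ := by rw [norm_smul, Complex.norm_I, one_mul]
      _ ≤ 2 * M * ‖h‖ + 2 * M * ‖k‖ := by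
          gcongr
          · exact hsab h hhsa
          · exact hsab k hksa
      _ ≤ 2 * M * ‖x‖ + 2 * M * ‖x‖ := by
          have h2M : (0:ℝ) ≤ 2 * M := by linarith
          gcongr
      _ = 4 * M * ‖x‖ := by ring
  exact (φ.mkContinuous (4 * M) hgen).continuous

include hn heven hmul hstar in
lemma phi_mul (a b : A) : φ (a * b) = φ a * φ b := by
  have hcont : Continuous φ := phi_cont hn heven φ hmul hstar
  set l := CStarAlgebra.approximateUnit A with hldef
  have hau := CStarAlgebra.increasingApproximateUnit A
  haveI hnb : l.NeBot := hau.neBot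
  have hq : ∀ j : ℕ, Filter.Tendsto (fun e : A => nuProd a (List.replicate j e)) l (𝓝 a) := by
    intro j
    induction j with
    | zero => simpa [nuProd_nil] using (tendsto_const_nhds : Filter.Tendsto (fun _ : A => a) l _)
    | succ j ih =>
      have hzero : Filter.Tendsto (fun e : A => nuProd a (List.replicate j e) - a) l (𝓝 0) := by
        simpa using ih.sub (tendsto_const_nhds : Filter.Tendsto (fun _ : A => a) l _)
      have h1 : Filter.Tendsto (fun e : A => (nuProd a (List.replicate j e) - a) * e) l (𝓝 0) := by
        refine squeeze_zero_norm'
          (a := fun e : A => ‖nuProd a (List.replicate j e) - a‖) ?_ ?_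
        · filter_upwards [hau.eventually_norm] with e he
          calc ‖(nuProd a (List.replicate j e) - a) * e‖
              ≤ ‖nuProd a (List.replicate j e) - a‖ * ‖e‖ := norm_mul_le _ _
            _ ≤ ‖nuProd a (List.replicate j e) - a‖ * 1 := by gcongr
            _ = ‖nuProd a (List.replicate j e) - a‖ := mul_one _
        · simpa using hzero.norm
      have h2 : Filter.Tendsto (fun e : A => a * e) l (𝓝 a) := hau.tendsto_mul_left a
      have heq : (fun e : A => nuProd a (List.replicate (j + 1) e))
          = fun e => (nuProd a (List.replicate j e) - a) * e + a * e := by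
        funext e
        rw [nuProd_replicate_succ, sub_mul, sub_add_cancel]
      rw [heq]
      simpa using h1.add h2
  have hkey1 : ∀ e : A, φ (nuProd a (List.replicate (n - 2) e) * b)
      = nuProd (φ a) (List.replicate (n - 2) (φ e)) * φ b := by
    intro e
    have h := key φ hmul a (List.replicate (n - 2) e ++ [b]) (by simp; omega)
    rw [nuProd_append, nuProd_singleton, List.map_append, List.map_replicate,
      nuProd_append] at h
    simpa [nuProd] using h
  have hkey2 : ∀ e : A, φ (nuProd a (List.replicate (n - 1) e))
      = nuProd (φ a) (List.replicate (n - 1) (φ e)) := by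
    intro e
    have h := key φ hmul a (List.replicate (n - 1) e) (by simp)
    simpa [List.map_replicate] using h
  set X : Unitization ℂ B := (φ a : Unitization ℂ B) with hX
  set Y : Unitization ℂ B := (φ b : Unitization ℂ B) with hY
  have hcast : ∀ (e : A) (j : ℕ),
      ((nuProd (φ a) (List.replicate j (φ e)) : B) : Unitization ℂ B)
        = X * ((φ e : Unitization ℂ B)) ^ j := by
    intro e j
    rw [inr_nuProd, List.map_replicate, nuProd_replicate_pow]
  have tinr : Continuous (fun y : B => (y : Unitization ℂ B)) :=
    (Unitization.isometry_inr (𝕜 := ℂ) (A := B)).continuous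
  have t2 : Filter.Tendsto (fun e : A => X * ((φ e : Unitization ℂ B)) ^ (n - 1)) l (𝓝 X) := by
    have h1 := (hcont.tendsto a).comp (hq (n - 1))
    have h2 := (tinr.tendsto (φ a)).comp h1
    refine h2.congr fun e => ?_
    show ((φ (nuProd a (List.replicate (n - 1) e)) : B) : Unitization ℂ B) = _
    rw [hkey2 e, hcast]
  have t1 : Filter.Tendsto (fun e : A => X * ((φ e : Unitization ℂ B)) ^ (n - 2) * Y) l
      (𝓝 ((φ (a * b) : Unitization ℂ B))) := by
    have ha1 : Filter.Tendsto (fun e : A => nuProd a (List.replicate (n - 2) e) * b) l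
        (𝓝 (a * b)) := (hq (n - 2)).mul tendsto_const_nhds
    have h2 := (tinr.tendsto _).comp ((hcont.tendsto _).comp ha1)
    refine h2.congr fun e => ?_
    show ((φ (nuProd a (List.replicate (n - 2) e) * b) : B) : Unitization ℂ B) = _
    rw [hkey1 e, Unitization.inr_mul, hcast]
  obtain ⟨M, hM1, hM⟩ := exists_bound hn heven φ hmul hstar
  have hest : ∀ᶠ e : A in l, ‖X * ((φ e : Unitization ℂ B)) ^ (n - 2) - X‖ ^ 2
      ≤ ‖X * ((φ e : Unitization ℂ B)) ^ (n - 1) - X‖ * ‖X‖ := by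
    filter_upwards [hau.eventually_nonneg, hau.eventually_norm] with e he0 he1
    set P : Unitization ℂ B := ((φ e : Unitization ℂ B)) with hP
    have hp0 : 0 ≤ φ e := phi_nonneg hn heven φ hmul hstar e he0
    have hP0 : 0 ≤ P := Unitization.inr_nonneg_iff.mpr hp0
    have hP1 : P ≤ 1 := by
      have hPn : ‖P‖ ≤ 1 := by
        rw [hP, Unitization.norm_inr]
        exact phi_norm_le_one_of_pos hn heven φ hmul hstar hM e he0 he1
      exact (CStarAlgebra.norm_le_one_iff_of_nonneg P hP0).mp hPn
    set Q : Unitization ℂ B := P ^ (n - 2) with hQ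
    set R : Unitization ℂ B := P ^ (n - 1) with hR
    have hQ0 : 0 ≤ Q := CStarAlgebra.pow_nonneg hP0 _
    have hQ1 : Q ≤ 1 := by
      have h := CStarAlgebra.pow_antitone hP0 hP1 (Nat.zero_le (n - 2))
      simpa [hQ] using h
    have hRQ : R ≤ Q := CStarAlgebra.pow_antitone hP0 hP1 (by omega : n - 2 ≤ n - 1)
    set D : Unitization ℂ B := 1 - Q with hD
    have hD0 : 0 ≤ D := by rw [hD, sub_nonneg]; exact hQ1
    have hD1 : D ≤ 1 := by
      rw [hD]
      simpa using sub_le_self 1 hQ0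
    have hDsa : IsSelfAdjoint D := by
      rw [hD, IsSelfAdjoint, star_sub, star_one, (IsSelfAdjoint.of_nonneg hQ0).star_eq]
    have hDD : D * D ≤ 1 - R := by
      have h1 : D * D ≤ D := by
        have h := CStarAlgebra.pow_antitone hD0 hD1 (by omega : 1 ≤ 2)
        simpa [pow_two] using h
      refine h1.trans ?_
      rw [hD]
      exact sub_le_sub_left hRQ 1
    have hXQ : X * Q - X = -(X * D) := by
      rw [hD, mul_sub, mul_one, neg_sub]
    have h0 : 0 ≤ X * (D * D) * star X := by
      have h := mul_star_self_nonneg (X * D)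
      rwa [star_mul, hDsa.star_eq, show X * D * (D * star X) = X * (D * D) * star X by
        simp only [mul_assoc]] at h
    calc ‖X * Q - X‖ ^ 2 = ‖X * D‖ * ‖X * D‖ := by rw [hXQ, norm_neg, pow_two]
      _ = ‖X * D * star (X * D)‖ := (CStarRing.norm_self_mul_star).symm
      _ = ‖X * (D * D) * star X‖ := by
          rw [star_mul, hDsa.star_eq]
          simp only [mul_assoc]
      _ ≤ ‖X * (1 - R) * star X‖ := by
          refine CStarAlgebra.norm_le_norm_of_nonneg_of_le h0 ?_
          exact star_right_conjugate_le_conjugate hDD X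
      _ ≤ ‖X * (1 - R)‖ * ‖star X‖ := norm_mul_le _ _
      _ = ‖X * R - X‖ * ‖X‖ := by
          rw [norm_star, mul_sub, mul_one, ← norm_neg, neg_sub]
  have hXR : Filter.Tendsto (fun e : A => ‖X * ((φ e : Unitization ℂ B)) ^ (n - 1) - X‖ * ‖X‖)
      l (𝓝 0) := by
    have h1 : Filter.Tendsto (fun e : A => ‖X * ((φ e : Unitization ℂ B)) ^ (n - 1) - X‖) l
        (𝓝 0) := by
      have := t2.sub (tendsto_const_nhds : Filter.Tendsto (fun _ : A => X) l _)
      simpa using this.norm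
    simpa using h1.mul_const ‖X‖
  have hG : Filter.Tendsto (fun e : A => X * ((φ e : Unitization ℂ B)) ^ (n - 2)) l (𝓝 X) := by
    have hG2 : Filter.Tendsto
        (fun e : A => ‖X * ((φ e : Unitization ℂ B)) ^ (n - 2) - X‖ ^ 2) l (𝓝 0) := by
      refine squeeze_zero' (Filter.Eventually.of_forall fun e => by positivity) hest hXR
    have hGn : Filter.Tendsto
        (fun e : A => ‖X * ((φ e : Unitization ℂ B)) ^ (n - 2) - X‖) l (𝓝 0) := by
      have h := (Real.continuous_sqrt.tendsto 0).comp hG2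
      rw [Real.sqrt_zero] at h
      refine h.congr fun e => ?_
      exact Real.sqrt_sq (norm_nonneg _)
    rw [tendsto_iff_norm_sub_tendsto_zero]
    exact hGn
  have hlim2 : Filter.Tendsto (fun e : A => X * ((φ e : Unitization ℂ B)) ^ (n - 2) * Y) l
      (𝓝 (X * Y)) := hG.mul tendsto_const_nhds
  have huniq : ((φ (a * b) : B) : Unitization ℂ B) = X * Y := tendsto_nhds_unique t1 hlim2
  have : ((φ (a * b) : B) : Unitization ℂ B) = ((φ a * φ b : B) : Unitization ℂ B) := by
    rw [huniq, hX, hY, Unitization.inr_mul]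
  exact Unitization.inr_injective this

end main
end EvenNHom

/-- An involutive `n`-homomorphism between (possibly nonunital) C*-algebras with
`n ≥ 2` even is a `*`-homomorphism. -/
theorem even_nhom_is_starhom {A B : Type*}
    [NonUnitalNormedRing A] [StarRing A] [CStarRing A] [CompleteSpace A]
    [NormedSpace ℂ A] [IsScalarTower ℂ A A] [SMulCommClass ℂ A A] [StarModule ℂ A]
    [NonUnitalNormedRing B] [StarRing B] [CStarRing B] [CompleteSpace B]
    [NormedSpace ℂ B] [IsScalarTower ℂ B B] [SMulCommClass ℂ B B] [StarModule ℂ B]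
    (n : ℕ) (hn : 2 ≤ n) (heven : Even n) (φ : A →ₗ[ℂ] B)
    (hmul : ∀ (x : A) (f : Fin (n - 1) → A),
      φ (nuProd x (List.ofFn f)) = nuProd (φ x) (List.ofFn fun i => φ (f i)))
    (hstar : ∀ a : A, φ (star a) = star (φ a)) :
    ∀ a b : A, φ (a * b) = φ a * φ b := by
  letI : NonUnitalCStarAlgebra A := {}
  letI : NonUnitalCStarAlgebra B := {}
  letI : PartialOrder A := EvenNHom.cstarOrder A
  haveI : StarOrderedRing A := EvenNHom.cstarOrder_starOrderedRing A
  letI : PartialOrder B := EvenNHom.cstarOrder B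
  haveI : StarOrderedRing B := EvenNHom.cstarOrder_starOrderedRing B
  exact EvenNHom.phi_mul hn heven φ hmul hstar
end
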